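/- arXiv:1403.3855 — 6 statements merged into one kernel-verified Lean document; each statement's English description precedes it below -/
import Mathlib

section
/- Let (V,≤) be a finite partially ordered set and let (V,E) be any finite directed acyclic graph whose transitive closure induces the partial order ≤ (for instance the Hasse diagram of ≤). For any two probability measures μ₁, μ₂ on V the following three statements are equivalent: (1) μ₂ stochastically dominates μ₁, i.e. μ₁ ⪯ μ₂; (2) there exists a coupling ρ of μ₁ and μ₂ compatible with ≤; (3) there exists a flow Q on (V,E) such that div Q = μ₁ − μ₂. -/
open scoped BigOperators

variable {V : Type*}

/-- A directed path in the digraph `(V, E)`: a nonempty list of vertices whose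
consecutive pairs are directed edges. -/
def IsDipath (E : Set (V × V)) (l : List V) : Prop :=
  l ≠ [] ∧ l.Chain' (fun a b => (a, b) ∈ E)

/-- The list of directed edges of a path. -/
def pathEdges (l : List V) : List (V × V) := l.zip l.tail

/-- The unit flow `Q_γ` along a path: `1` on the edges of the path and `0` elsewhere. -/
noncomputable def pathFlow (l : List V) : V × V → ℝ :=
  Set.indicator {e | e ∈ pathEdges l} 1

/-- A flow on the digraph `(V, E)`: nonnegative and supported on `E`. -/
def IsFlow (E : Set (V × V)) (Q : V × V → ℝ) : Prop :=
  (∀ e, 0 ≤ Q e) ∧ ∀ e, e ∉ E → Q e = 0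

/-- The divergence of a flow at a vertex. -/
noncomputable def divergence (Q : V × V → ℝ) (x : V) : ℝ :=
  (∑' y, Q (x, y)) - ∑' y, Q (y, x)

/-- A relation is acyclic if it has no directed cycles. -/
def AcyclicRel (r : V → V → Prop) : Prop := ∀ x, ¬ Relation.TransGen r x x

/-- The edge relation of a digraph. -/
def edgeRel (E : Set (V × V)) : V → V → Prop := fun a b => (a, b) ∈ E

/-- The partial order induced by an acyclic digraph: `x ≤ y` iff `x = y` or there is
a directed path from `x` to `y`. -/
def inducedLE (E : Set (V × V)) : V → V → Prop :=
  Relation.ReflTransGen (edgeRel E)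

/-- A finitely decomposable flow: a pointwise sum `∑ₙ qₙ Q_{γₙ}` over finite
self-avoiding directed paths with summable nonnegative weights. -/
def FinDecomposable (E : Set (V × V)) (Q : V × V → ℝ) : Prop :=
  ∃ (γ : ℕ → List V) (q : ℕ → ℝ),
    (∀ n, IsDipath E (γ n)) ∧ (∀ n, (γ n).Nodup) ∧ (∀ n, 0 ≤ q n) ∧ Summable q ∧
    ∀ e, Q e = ∑' n, q n * pathFlow (γ n) e

/-- A probability measure on a countable set, as a nonnegative function of total sum `1`. -/
def IsProb (μ : V → ℝ) : Prop := (∀ x, 0 ≤ μ x) ∧ HasSum μ 1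

/-- A coupling of `μ₁` and `μ₂`: a probability on `V × V` with the given marginals. -/
def IsCoupling (μ₁ μ₂ : V → ℝ) (ρ : V × V → ℝ) : Prop :=
  (∀ p, 0 ≤ ρ p) ∧ (∀ x, HasSum (fun y => ρ (x, y)) (μ₁ x)) ∧
    ∀ y, HasSum (fun x => ρ (x, y)) (μ₂ y)

/-- Stochastic domination: `∑ f μ₁ ≤ ∑ f μ₂` for every bounded increasing `f`. -/
def StochDom (le : V → V → Prop) (μ₁ μ₂ : V → ℝ) : Prop :=
  ∀ f : V → ℝ, (∃ C, ∀ x, |f x| ≤ C) → (∀ x y, le x y → f x ≤ f y) →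
    ∑' x, f x * μ₁ x ≤ ∑' x, f x * μ₂ x

/-- Finite-case divergence. -/
noncomputable def divergenceF [Fintype V] (Q : V × V → ℝ) (x : V) : ℝ :=
  (∑ y, Q (x, y)) - ∑ y, Q (y, x)

/-- Probability measure on a finite set. -/
def IsProbF [Fintype V] (μ : V → ℝ) : Prop := (∀ x, 0 ≤ μ x) ∧ ∑ x, μ x = 1

/-- Coupling on a finite set. -/
def IsCouplingF [Fintype V] (μ₁ μ₂ : V → ℝ) (ρ : V × V → ℝ) : Prop :=
  (∀ p, 0 ≤ ρ p) ∧ (∀ x, ∑ y, ρ (x, y) = μ₁ x) ∧ ∀ y, ∑ x, ρ (x, y) = μ₂ y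

/-- Stochastic domination on a finite set. -/
def StochDomF [Fintype V] (le : V → V → Prop) (μ₁ μ₂ : V → ℝ) : Prop :=
  ∀ f : V → ℝ, (∀ x y, le x y → f x ≤ f y) → ∑ x, f x * μ₁ x ≤ ∑ x, f x * μ₂ x

/-- The cost of a path: the sum of the weights of its edges. -/
noncomputable def pathCost (w : V × V → ℝ) (l : List V) : ℝ := ((pathEdges l).map w).sum

/-- The geodesic cost associated to a weight function on a digraph. -/
noncomputable def geoCost (E : Set (V × V)) (w : V × V → ℝ) (x y : V) : ℝ :=
  sInf {r | ∃ l, IsDipath E l ∧ l.head? = some x ∧ l.getLast? = some y ∧ pathCost w l = r}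



-- (3) → (1)
lemma flow_to_dom [Fintype V] (E : Set (V×V)) (μ₁ μ₂ : V → ℝ)
    (Q : V × V → ℝ) (hQ : IsFlow E Q) (hdiv : ∀ x, divergenceF Q x = μ₁ x - μ₂ x) :
    StochDomF (inducedLE E) μ₁ μ₂ := by
  intro f hf
  rw [← sub_nonpos]
  have e1 : ∑ x, f x * μ₁ x - ∑ x, f x * μ₂ x = ∑ x, f x * divergenceF Q x := by
    rw [← Finset.sum_sub_distrib]
    refine Finset.sum_congr rfl fun x _ => ?_
    rw [hdiv x, mul_sub]
  have e2 : ∑ x, f x * divergenceF Q x = ∑ p : V × V, (f p.1 - f p.2) * Q p := by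
    unfold divergenceF
    rw [Fintype.sum_prod_type]
    have h2 : ∀ x : V, f x * ((∑ y, Q (x, y)) - ∑ y, Q (y, x))
        = (∑ y, f x * Q (x, y)) - ∑ y, f x * Q (y, x) := by
      intro x; rw [mul_sub, Finset.mul_sum, Finset.mul_sum]
    simp only [h2]
    rw [Finset.sum_sub_distrib]
    have h3 : ∑ x : V, ∑ y : V, f x * Q (y, x) = ∑ a : V, ∑ b : V, f b * Q (a, b) :=
      Finset.sum_comm
    rw [h3]
    rw [← Finset.sum_sub_distrib]
    refine Finset.sum_congr rfl fun a _ => ?_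
    rw [← Finset.sum_sub_distrib]
    refine Finset.sum_congr rfl fun b _ => ?_
    ring
  rw [e1, e2]
  refine Finset.sum_nonpos fun p _ => ?_
  by_cases hp : Q p = 0
  · rw [hp]; simp
  · have hpE : p ∈ E := by
      by_contra hE; exact hp (hQ.2 p hE)
    have hle : f p.1 ≤ f p.2 := hf _ _ (Relation.ReflTransGen.single hpE)
    exact mul_nonpos_of_nonpos_of_nonneg (by linarith) (hQ.1 p)

-- unit flow from x to y when x ≤ y
lemma exists_unit_flow [Fintype V] [DecidableEq V] (E : Set (V×V)) {x y : V}
    (h : inducedLE E x y) :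
    ∃ Q : V × V → ℝ, IsFlow E Q ∧
      ∀ v, divergenceF Q v = (if v = x then 1 else 0) - (if v = y then 1 else 0) := by
  induction h using Relation.ReflTransGen.head_induction_on with
  | refl => exact ⟨0, ⟨fun e => le_refl 0, fun e _ => rfl⟩, fun v => by
      simp [divergenceF]⟩
  | head hac hcy ih =>
    rename_i a c
    obtain ⟨Q, hQ, hdiv⟩ := ih
    classical
    refine ⟨fun e => Q e + (if e = (a, c) then 1 else 0), ⟨fun e => ?_, fun e he => ?_⟩, fun v => ?_⟩
    · have := hQ.1 e; positivity
    · have h1 : Q e = 0 := hQ.2 e he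
      have h2 : e ≠ (a, c) := by rintro rfl; exact he hac
      simp [h1, h2]
    · have hout : ∀ w : V, (if (v, w) = (a, c) then (1:ℝ) else 0)
          = if v = a then (if w = c then 1 else 0) else 0 := by
        intro w
        by_cases h1 : v = a <;> by_cases h2 : w = c <;> simp [Prod.ext_iff, h1, h2]
      have hin : ∀ w : V, (if (w, v) = (a, c) then (1:ℝ) else 0)
          = if v = c then (if w = a then 1 else 0) else 0 := by
        intro w
        by_cases h1 : v = c <;> by_cases h2 : w = a <;> simp [Prod.ext_iff, h1, h2]
      have : divergenceF (fun e => Q e + (if e = (a, c) then 1 else 0)) v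
          = divergenceF Q v + ((if v = a then 1 else 0) - (if v = c then 1 else 0)) := by
        unfold divergenceF
        rw [Finset.sum_add_distrib, Finset.sum_add_distrib]
        simp only [hout, hin]
        have s1 : ∑ w : V, (if v = a then (if w = c then (1:ℝ) else 0) else 0)
            = if v = a then 1 else 0 := by
          by_cases h1 : v = a <;> simp [h1, Finset.sum_ite_eq']
        have s2 : ∑ w : V, (if v = c then (if w = a then (1:ℝ) else 0) else 0)
            = if v = c then 1 else 0 := by
          by_cases h1 : v = c <;> simp [h1, Finset.sum_ite_eq']
        rw [s1, s2]; ring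
      rw [this, hdiv v]
      by_cases h1 : v = a <;> by_cases h2 : v = c <;> by_cases h3 : v = x <;>
        by_cases h4 : v = y <;> simp [h1, h2, h3, h4]

-- (2) → (3)
lemma coupling_to_flow [Fintype V] (E : Set (V×V)) (μ₁ μ₂ : V → ℝ)
    (ρ : V × V → ℝ) (hρ : IsCouplingF μ₁ μ₂ ρ)
    (hsupp : ∀ p : V × V, ρ p ≠ 0 → inducedLE E p.1 p.2) :
    ∃ Q : V × V → ℝ, IsFlow E Q ∧ ∀ x, divergenceF Q x = μ₁ x - μ₂ x := by
  classical
  -- choose a unit flow for each comparable pair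
  have hchoice : ∀ p : V × V, ∃ Qp : V × V → ℝ,
      (inducedLE E p.1 p.2 → IsFlow E Qp ∧
        ∀ v, divergenceF Qp v = (if v = p.1 then 1 else 0) - (if v = p.2 then 1 else 0)) ∧
      (¬ inducedLE E p.1 p.2 → Qp = 0) := by
    intro p
    by_cases h : inducedLE E p.1 p.2
    · obtain ⟨Qp, h1, h2⟩ := exists_unit_flow E h
      exact ⟨Qp, fun _ => ⟨h1, h2⟩, fun h' => absurd h h'⟩
    · exact ⟨0, fun h' => absurd h' h, fun _ => rfl⟩
  choose Qp hQp hQp0 using hchoice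
  refine ⟨fun e => ∑ p : V × V, ρ p * Qp p e, ⟨fun e => ?_, fun e he => ?_⟩, fun x => ?_⟩
  · refine Finset.sum_nonneg fun p _ => ?_
    by_cases h : inducedLE E p.1 p.2
    · exact mul_nonneg (hρ.1 p) (((hQp p h).1).1 e)
    · rw [hQp0 p h]; simp
  · refine Finset.sum_eq_zero fun p _ => ?_
    by_cases h : inducedLE E p.1 p.2
    · rw [((hQp p h).1).2 e he, mul_zero]
    · rw [hQp0 p h]; simp
  · have hlin : divergenceF (fun e => ∑ p : V × V, ρ p * Qp p e) x
        = ∑ p : V × V, ρ p * divergenceF (Qp p) x := by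
      unfold divergenceF
      have c1 : ∑ y : V, ∑ p : V × V, ρ p * Qp p (x, y)
          = ∑ p : V × V, ∑ y : V, ρ p * Qp p (x, y) := Finset.sum_comm
      have c2 : ∑ y : V, ∑ p : V × V, ρ p * Qp p (y, x)
          = ∑ p : V × V, ∑ y : V, ρ p * Qp p (y, x) := Finset.sum_comm
      show (∑ y : V, ∑ p : V × V, ρ p * Qp p (x, y))
          - (∑ y : V, ∑ p : V × V, ρ p * Qp p (y, x)) = _
      rw [c1, c2, ← Finset.sum_sub_distrib]
      refine Finset.sum_congr rfl fun p _ => ?_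
      rw [mul_sub, Finset.mul_sum, Finset.mul_sum]
    rw [hlin]
    have hterm : ∀ p : V × V, ρ p * divergenceF (Qp p) x
        = ρ p * ((if x = p.1 then 1 else 0) - (if x = p.2 then 1 else 0)) := by
      intro p
      by_cases h : inducedLE E p.1 p.2
      · rw [(hQp p h).2 x]
      · have : ρ p = 0 := by
          by_contra hne; exact h (hsupp p hne)
        rw [this]; simp
    simp only [hterm]
    have expand : ∑ p : V × V, ρ p * ((if x = p.1 then (1:ℝ) else 0) - (if x = p.2 then 1 else 0))
        = (∑ p : V × V, ρ p * (if x = p.1 then 1 else 0))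
          - ∑ p : V × V, ρ p * (if x = p.2 then 1 else 0) := by
      rw [← Finset.sum_sub_distrib]
      exact Finset.sum_congr rfl fun p _ => by ring
    rw [expand]
    have m1 : ∑ p : V × V, ρ p * (if x = p.1 then (1:ℝ) else 0) = μ₁ x := by
      rw [Fintype.sum_prod_type]
      rw [← hρ.2.1 x]
      rw [Finset.sum_eq_single x]
      · exact Finset.sum_congr rfl fun b _ => by simp
      · intro a _ ha
        refine Finset.sum_eq_zero fun b _ => ?_
        simp [Ne.symm ha]
      · intro h; exact absurd (Finset.mem_univ x) h
    have m2 : ∑ p : V × V, ρ p * (if x = p.2 then (1:ℝ) else 0) = μ₂ x := by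
      rw [Fintype.sum_prod_type_right]
      rw [← hρ.2.2 x]
      rw [Finset.sum_eq_single x]
      · exact Finset.sum_congr rfl fun b _ => by simp
      · intro a _ ha
        refine Finset.sum_eq_zero fun b _ => ?_
        simp [Ne.symm ha]
      · intro h; exact absurd (Finset.mem_univ x) h
    rw [m1, m2]

-- (1) → (2)
lemma dom_to_coupling [Fintype V] (E : Set (V×V)) (μ₁ μ₂ : V → ℝ)
    (h₁ : IsProbF μ₁) (h₂ : IsProbF μ₂) (hdom : StochDomF (inducedLE E) μ₁ μ₂) :
    ∃ ρ : V × V → ℝ, IsCouplingF μ₁ μ₂ ρ ∧ ∀ p : V × V, ρ p ≠ 0 → inducedLE E p.1 p.2 := by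
  classical
  by_contra hno
  -- the set of admissible couplings
  set S : Set ((V × V) → ℝ) := {ρ | (∀ p, 0 ≤ ρ p) ∧ (∀ p : V × V, ¬ inducedLE E p.1 p.2 → ρ p = 0)
      ∧ ∑ p : V × V, ρ p = 1} with hSdef
  -- the marginal map
  have hadd : ∀ (ρ σ : (V × V) → ℝ),
      (fun x => ∑ y, (ρ + σ) (x, y), fun y => ∑ x, (ρ + σ) (x, y))
      = ((fun x => ∑ y, ρ (x, y), fun y => ∑ x, ρ (x, y)) :
          (V → ℝ) × (V → ℝ)) + (fun x => ∑ y, σ (x, y), fun y => ∑ x, σ (x, y)) := by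
    intro ρ σ
    refine Prod.ext ?_ ?_ <;> funext v <;>
      simp [Finset.sum_add_distrib]
  set A : ((V × V) → ℝ) →ₗ[ℝ] ((V → ℝ) × (V → ℝ)) :=
    { toFun := fun ρ => (fun x => ∑ y, ρ (x, y), fun y => ∑ x, ρ (x, y)),
      map_add' := hadd,
      map_smul' := by
        intro c ρ
        refine Prod.ext ?_ ?_ <;> funext v <;> simp [Finset.mul_sum] } with hAdef
  have hAcont : Continuous A := A.continuous_of_finiteDimensional
  have hAapp : ∀ ρ : (V × V) → ℝ,
      A ρ = (fun x => ∑ y, ρ (x, y), fun y => ∑ x, ρ (x, y)) := fun ρ => rfl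
  set D : Set ((V → ℝ) × (V → ℝ)) := A '' S with hDdef
  -- (μ₁, μ₂) ∉ D
  have hnotin : (μ₁, μ₂) ∉ D := by
    rintro ⟨ρ, ⟨hρ1, hρ2, hρ3⟩, hρ4⟩
    refine hno ⟨ρ, ⟨hρ1, ?_, ?_⟩, fun p hp => by
      by_contra hc; exact hp (hρ2 p hc)⟩
    · intro x
      rw [hAapp] at hρ4
      exact congrFun (congrArg Prod.fst hρ4) x
    · intro y
      rw [hAapp] at hρ4
      exact congrFun (congrArg Prod.snd hρ4) y
  -- S is compact and convex
  have hSsub : S ⊆ stdSimplex ℝ (V × V) := fun ρ hρ => ⟨hρ.1, hρ.2.2⟩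
  have hSclosed : IsClosed S := by
    have : S = (⋂ p : V × V, {ρ : (V × V) → ℝ | 0 ≤ ρ p})
        ∩ ((⋂ p ∈ {q : V × V | ¬ inducedLE E q.1 q.2}, {ρ : (V × V) → ℝ | ρ p = 0})
          ∩ {ρ : (V × V) → ℝ | ∑ p : V × V, ρ p = 1}) := by
      ext ρ
      simp only [hSdef, Set.mem_setOf_eq, Set.mem_inter_iff, Set.mem_iInter]
    rw [this]
    refine IsClosed.inter (isClosed_iInter fun p => isClosed_le continuous_const (continuous_apply p))
      (IsClosed.inter (isClosed_biInter fun p _ => isClosed_eq (continuous_apply p) continuous_const)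
        (isClosed_eq (by continuity) continuous_const))
  have hScompact : IsCompact S :=
    IsCompact.of_isClosed_subset (isCompact_stdSimplex _ _) hSclosed hSsub
  have hSconvex : Convex ℝ S := by
    intro ρ hρ σ hσ a b ha hb hab
    refine ⟨?_, fun q hq => ?_, ?_⟩
    · intro q
      have h1 := hρ.1 q
      have h2 := hσ.1 q
      simp only [Pi.add_apply, Pi.smul_apply, smul_eq_mul]
      exact add_nonneg (mul_nonneg ha h1) (mul_nonneg hb h2)
    · simp [hρ.2.1 q hq, hσ.2.1 q hq]
    · simp only [Pi.add_apply, Pi.smul_apply, smul_eq_mul]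
      rw [Finset.sum_add_distrib, ← Finset.mul_sum, ← Finset.mul_sum, hρ.2.2, hσ.2.2]
      simpa using hab
  have hDconvex : Convex ℝ D := hSconvex.linear_image A
  have hDclosed : IsClosed D := (hScompact.image hAcont).isClosed
  obtain ⟨L, u, hLu, hD⟩ := geometric_hahn_banach_point_closed hDconvex hDclosed hnotin
  set f : V → ℝ := fun x => L ((Pi.single x 1 : V → ℝ), (0 : V → ℝ)) with hfdef
  set g : V → ℝ := fun y => L ((0 : V → ℝ), (Pi.single y 1 : V → ℝ)) with hgdef
  have hL : ∀ μ ν : V → ℝ, L (μ, ν) = (∑ x, μ x * f x) + ∑ y, ν y * g y := by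
    intro μ ν
    have hrep : ((μ, ν) : (V → ℝ) × (V → ℝ))
        = (∑ x : V, μ x • (((Pi.single x 1 : V → ℝ), (0 : V → ℝ)) : (V → ℝ) × (V → ℝ)))
          + ∑ y : V, ν y • (((0 : V → ℝ), (Pi.single y 1 : V → ℝ)) : (V → ℝ) × (V → ℝ)) := by
      refine Prod.ext ?_ ?_ <;>
        · simp only [Prod.fst_sum, Prod.snd_sum, Prod.smul_mk, Prod.fst_add, Prod.snd_add,
            smul_zero, Finset.sum_const_zero, add_zero, zero_add]
          funext v
          simp [Finset.sum_apply, Pi.single_apply, Finset.sum_ite_eq']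
    rw [hrep, map_add, map_sum, map_sum]
    simp only [map_smul, smul_eq_mul]
    rfl
  have hfg : ∀ x y, inducedLE E x y → u < f x + g y := by
    intro x y hxy
    have hmem : (((Pi.single x 1 : V → ℝ), (Pi.single y 1 : V → ℝ)) : (V → ℝ) × (V → ℝ)) ∈ D := by
      refine ⟨fun p => if p = (x, y) then 1 else 0, ⟨fun p => by positivity, fun p hp => ?_, ?_⟩, ?_⟩
      · have : p ≠ (x, y) := by rintro rfl; exact hp hxy
        simp [this]
      · simp
      · rw [hAapp]
        simp only [Prod.mk.injEq]
        constructor <;> funext v <;> beta_reduce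
        · by_cases h1 : v = x <;> simp [h1, Pi.single_apply, Finset.sum_ite_eq']
        · by_cases h1 : v = y <;> simp [h1, Pi.single_apply, Finset.sum_ite_eq']
    have h1 := hD _ hmem
    have h2 : L ((Pi.single x 1 : V → ℝ), (Pi.single y 1 : V → ℝ)) = f x + g y := by
      rw [hL]
      simp [Pi.single_apply, ite_mul, Finset.sum_ite_eq']
    linarith [h1, h2.symm ▸ h1]
  -- the increasing minorant of g
  have hne : ∀ x : V, ((Finset.univ.filter fun y => inducedLE E x y).image g).Nonempty := by
    intro x
    exact ⟨g x, Finset.mem_image.2 ⟨x, Finset.mem_filter.2 ⟨Finset.mem_univ x,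
      Relation.ReflTransGen.refl⟩, rfl⟩⟩
  set G : V → ℝ := fun x => ((Finset.univ.filter fun y => inducedLE E x y).image g).min' (hne x)
    with hGdef
  have hGmem : ∀ x : V, ∃ z, inducedLE E x z ∧ G x = g z := by
    intro x
    have := Finset.min'_mem _ (hne x)
    rw [Finset.mem_image] at this
    obtain ⟨z, hz, hgz⟩ := this
    exact ⟨z, (Finset.mem_filter.1 hz).2, hgz.symm⟩
  have hGinc : ∀ x y, inducedLE E x y → G x ≤ G y := by
    intro x y hxy
    obtain ⟨z, hz, hGz⟩ := hGmem y
    rw [hGz]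
    refine Finset.min'_le _ _ (Finset.mem_image.2 ⟨z, Finset.mem_filter.2
      ⟨Finset.mem_univ z, hxy.trans hz⟩, rfl⟩)
  have hGg : ∀ x, G x ≤ g x := by
    intro x
    exact Finset.min'_le _ _ (Finset.mem_image.2 ⟨x, Finset.mem_filter.2 ⟨Finset.mem_univ x,
      Relation.ReflTransGen.refl⟩, rfl⟩)
  have hfG : ∀ x, u - G x ≤ f x := by
    intro x
    obtain ⟨z, hz, hGz⟩ := hGmem x
    have := hfg x z hz
    rw [hGz]; linarith
  have hdomG := hdom G hGinc
  -- put everything together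
  have hLval : L (μ₁, μ₂) = (∑ x, μ₁ x * f x) + ∑ y, μ₂ y * g y := hL μ₁ μ₂
  have hlow1 : ∑ x, μ₁ x * (u - G x) ≤ ∑ x, μ₁ x * f x :=
    Finset.sum_le_sum fun x _ => mul_le_mul_of_nonneg_left (hfG x) (h₁.1 x)
  have hlow2 : ∑ y, μ₂ y * G y ≤ ∑ y, μ₂ y * g y :=
    Finset.sum_le_sum fun y _ => mul_le_mul_of_nonneg_left (hGg y) (h₂.1 y)
  have hsum1 : ∑ x, μ₁ x * (u - G x) = u - ∑ x, G x * μ₁ x := by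
    have : ∀ x : V, μ₁ x * (u - G x) = u * μ₁ x - G x * μ₁ x := by intro x; ring
    simp only [this]
    rw [Finset.sum_sub_distrib, ← Finset.mul_sum, h₁.2, mul_one]
  have hsum2 : ∑ y, μ₂ y * G y = ∑ y, G y * μ₂ y := by
    exact Finset.sum_congr rfl fun y _ => mul_comm _ _
  linarith [hLu, hdomG]


/-- **Strassen's theorem with a third equivalent statement, finite case.**
For a finite poset described by an acyclic digraph `(V, E)` whose transitive closure
induces the order, the following are equivalent: (1) `μ₁ ⪯ μ₂`; (2) there is a coupling
of `μ₁, μ₂` compatible with the order; (3) there is a flow `Q` on `(V, E)` with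
`div Q = μ₁ - μ₂`. -/
theorem strassen_finite {V : Type*} [Fintype V]
    (E : Set (V × V)) (hloop : ∀ x : V, (x, x) ∉ E) (hacyc : AcyclicRel (edgeRel E))
    (μ₁ μ₂ : V → ℝ) (h₁ : IsProbF μ₁) (h₂ : IsProbF μ₂) :
    (StochDomF (inducedLE E) μ₁ μ₂ ↔
      ∃ ρ : V × V → ℝ, IsCouplingF μ₁ μ₂ ρ ∧
        ∀ p : V × V, ρ p ≠ 0 → inducedLE E p.1 p.2) ∧
    (StochDomF (inducedLE E) μ₁ μ₂ ↔
      ∃ Q : V × V → ℝ, IsFlow E Q ∧ ∀ x, divergenceF Q x = μ₁ x - μ₂ x) := by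
  constructor
  · constructor
    · intro h
      exact dom_to_coupling E μ₁ μ₂ h₁ h₂ h
    · rintro ⟨ρ, hρ, hsupp⟩
      obtain ⟨Q, hQ, hdiv⟩ := coupling_to_flow E μ₁ μ₂ ρ hρ hsupp
      exact flow_to_dom E μ₁ μ₂ Q hQ hdiv
  · constructor
    · intro h
      obtain ⟨ρ, hρ, hsupp⟩ := dom_to_coupling E μ₁ μ₂ h₁ h₂ h
      exact coupling_to_flow E μ₁ μ₂ ρ hρ hsupp
    · rintro ⟨Q, hQ, hdiv⟩
      exact flow_to_dom E μ₁ μ₂ Q hQ hdiv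
end

section
/- Let Q be an acyclic flow on an infinite digraph (V,E) with countable vertex set such that div Q = μ₁ − μ₂ for two probability measures μ₁, μ₂ on V. If Q has zero flux towards infinity, then Q is finitely decomposable. -/
open scoped BigOperators

variable {V : Type*}

open scoped ENNReal Classical

section Aux

variable {V : Type*}


section ListLemmas
variable {r : V → V → Prop}

lemma pathEdges_cons (a : V) {l : List V} (hl : l ≠ []) :
    pathEdges (a :: l) = (a, l.head hl) :: pathEdges l := by
  cases l with
  | nil => simp at hl
  | cons b t => rfl

lemma chain'_iff_pathEdges : ∀ {l : List V},
    l.Chain' r ↔ ∀ e ∈ pathEdges l, r e.1 e.2 := by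
  intro l
  induction l with
  | nil => simp [pathEdges, List.Chain']
  | cons a t ih =>
    cases t with
    | nil => simp [pathEdges, List.Chain']
    | cons b t' =>
      simp only [List.Chain'] at ih ⊢
      rw [List.isChain_cons_cons, show pathEdges (a :: b :: t') = (a,b) :: pathEdges (b :: t') from rfl, ih]
      simp

lemma chain_transGen {x y : V} {l : List V} (h : List.Chain r x l) (hy : y ∈ l) :
    Relation.TransGen r x y := by
  induction l generalizing x with
  | nil => simp at hy
  | cons b t ih =>
    rw [List.Chain, List.isChain_cons_cons] at h
    rcases List.mem_cons.1 hy with rfl | hy'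
    · exact Relation.TransGen.single h.1
    · exact Relation.TransGen.head h.1 (ih h.2 hy')

lemma chain'_nodup (hacyc : ∀ x, ¬ Relation.TransGen r x x) :
    ∀ {l : List V}, l.Chain' r → l.Nodup := by
  intro l
  induction l with
  | nil => intro _; simp
  | cons a t ih =>
    intro h
    have h' : List.Chain r a t := h
    have ht : t.Chain' r := (List.isChain_cons.1 h).2
    refine List.nodup_cons.2 ⟨fun ha => hacyc a (chain_transGen h' ha), ih ht⟩
end ListLemmas

lemma pathEdges_append : ∀ {a : List V} (b : List V) (ha : a ≠ []) (hb : b ≠ []),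
    pathEdges (a ++ b) = pathEdges a ++ (a.getLast ha, b.head hb) :: pathEdges b := by
  intro a
  induction a with
  | nil => intro b ha hb; simp at ha
  | cons x a' ih =>
    intro b ha hb
    cases a' with
    | nil =>
      simp only [List.nil_append, List.singleton_append]
      rw [pathEdges_cons x hb]
      rfl
    | cons z t =>
      have ha' : (z :: t) ≠ [] := by simp
      have hab : (z :: t) ++ b ≠ [] := by simp
      rw [List.cons_append, pathEdges_cons x hab, ih b ha' hb, pathEdges_cons x ha']
      simp [List.head_append_of_ne_nil, List.getLast_cons ha']

lemma mem_pathEdges_iff {u v : V} : ∀ {l : List V},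
    (u, v) ∈ pathEdges l ↔ ∃ a b, l = a ++ u :: v :: b := by
  intro l
  induction l with
  | nil =>
    simp only [pathEdges, List.zip_nil_left, List.not_mem_nil, false_iff]
    rintro ⟨a, b, h⟩
    exact absurd h (by simp)
  | cons x t ih =>
    cases t with
    | nil =>
      simp only [pathEdges, List.tail, List.zip_nil_right, List.not_mem_nil, false_iff]
      rintro ⟨a, b, h⟩
      rcases a with _ | ⟨c, a⟩ <;> simp at h
    | cons y t' =>
      rw [show pathEdges (x :: y :: t') = (x,y) :: pathEdges (y :: t') from rfl]
      simp only [List.mem_cons, ih, Prod.mk.injEq]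
      constructor
      · rintro (⟨rfl, rfl⟩ | ⟨a, b, h⟩)
        · exact ⟨[], t', rfl⟩
        · exact ⟨x :: a, b, by rw [List.cons_append, ← h]⟩
      · rintro ⟨a, b, h⟩
        rcases a with _ | ⟨c, a⟩
        · simp only [List.nil_append, List.cons.injEq] at h
          exact Or.inl ⟨h.1.symm, (h.2.1).symm⟩
        · simp only [List.cons_append, List.cons.injEq] at h
          exact Or.inr ⟨a, b, h.2⟩

noncomputable def wgt (p : V → V → ℝ≥0∞) (l : List V) : ℝ≥0∞ :=
  ((pathEdges l).map fun e => p e.1 e.2).prod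

noncomputable def headw (m : V → ℝ≥0∞) (l : List V) : ℝ≥0∞ := l.head?.elim 0 m
noncomputable def endw (m : V → ℝ≥0∞) (l : List V) : ℝ≥0∞ := l.getLast?.elim 0 m

section WgtLemmas
variable {p : V → V → ℝ≥0∞}

lemma wgt_singleton (a : V) : wgt p [a] = 1 := rfl

lemma wgt_cons (a : V) {l : List V} (hl : l ≠ []) :
    wgt p (a :: l) = p a (l.head hl) * wgt p l := by
  unfold wgt
  rw [show pathEdges (a :: l) = (a, l.head hl) :: pathEdges l from ?_]
  · simp
  · cases l with
    | nil => simp at hl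
    | cons b t => rfl

lemma wgt_append {a b : List V} (ha : a ≠ []) (hb : b ≠ []) :
    wgt p (a ++ b) = wgt p a * (p (a.getLast ha) (b.head hb) * wgt p b) := by
  unfold wgt
  rw [pathEdges_append b ha hb]
  simp [mul_comm, mul_assoc, mul_left_comm]


lemma wgt_eq_zero_of_mem {l : List V} {x y : V} (hmem : (x, y) ∈ pathEdges l)
    (hz : p x y = 0) : wgt p l = 0 := by
  apply List.prod_eq_zero
  rw [← hz]
  exact List.mem_map.2 ⟨(x, y), hmem, rfl⟩

lemma wgt_ne_zero_chain {l : List V} (h : wgt p l ≠ 0) :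
    l.Chain' (fun a b => p a b ≠ 0) := by
  rw [chain'_iff_pathEdges]
  intro e he hz
  exact h (wgt_eq_zero_of_mem he hz)

lemma headw_eq {m : V → ℝ≥0∞} {l : List V} (hl : l ≠ []) : headw m l = m (l.head hl) := by
  unfold headw; rw [List.head?_eq_head hl]; rfl

lemma endw_eq {m : V → ℝ≥0∞} {l : List V} (hl : l ≠ []) : endw m l = m (l.getLast hl) := by
  unfold endw; rw [List.getLast?_eq_getLast hl]; rfl

end WgtLemmas

section TsumTools

lemma tsum_fiber {α ι : Type*} (F : α → ℝ≥0∞) (k : α → ι) :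
    ∑' a, F a = ∑' (i : ι), ∑' a, if k a = i then F a else 0 := by
  rw [ENNReal.tsum_comm]
  apply tsum_congr
  intro a
  rw [tsum_eq_single (k a) (by intro i hi; rw [if_neg (fun h => hi h.symm)]), if_pos rfl]

lemma tsum_ne_zero_exists {α : Type*} {f : α → ℝ≥0∞} (h : ∑' a, f a ≠ 0) :
    ∃ a, f a ≠ 0 := by
  by_contra hc
  push_neg at hc
  exact h (by simp [hc])

end TsumTools
section OpsDefs
variable {V : Type*}

noncomputable def Aop (p : V → V → ℝ≥0∞) : ℕ → (V → ℝ≥0∞) → V → ℝ≥0∞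
  | 0, f => f
  | n+1, f => fun y => ∑' z, p y z * Aop p n f z

noncomputable def nuop (p : V → V → ℝ≥0∞) (μ0 : V → ℝ≥0∞) : ℕ → V → ℝ≥0∞
  | 0 => μ0
  | t+1 => fun u => ∑' z, nuop p μ0 t z * p z u

variable {p : V → V → ℝ≥0∞}

lemma Aop_zero (f : V → ℝ≥0∞) : Aop p 0 f = f := rfl

lemma Aop_succ (n : ℕ) (f : V → ℝ≥0∞) (y : V) :
    Aop p (n+1) f y = ∑' z, p y z * Aop p n f z := rfl

lemma Aop_mono {f g : V → ℝ≥0∞} (h : ∀ x, f x ≤ g x) :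
    ∀ n y, Aop p n f y ≤ Aop p n g y := by
  intro n
  induction n with
  | zero => exact h
  | succ n ih =>
    intro y
    rw [Aop_succ, Aop_succ]
    exact ENNReal.tsum_le_tsum fun z => mul_le_mul_right (ih z) _

lemma Aop_le_one (hp : ∀ y, ∑' z, p y z ≤ 1) {f : V → ℝ≥0∞} (hf : ∀ x, f x ≤ 1) :
    ∀ n y, Aop p n f y ≤ 1 := by
  intro n
  induction n with
  | zero => exact hf
  | succ n ih =>
    intro y
    rw [Aop_succ]
    calc ∑' z, p y z * Aop p n f z ≤ ∑' z, p y z * 1 :=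
          ENNReal.tsum_le_tsum fun z => mul_le_mul_right (ih z) _
      _ = ∑' z, p y z := by simp
      _ ≤ 1 := hp y

lemma Aop_add (f g : V → ℝ≥0∞) :
    ∀ n y, Aop p n (fun x => f x + g x) y = Aop p n f y + Aop p n g y := by
  intro n
  induction n with
  | zero => intro y; rfl
  | succ n ih =>
    intro y
    rw [Aop_succ, Aop_succ, Aop_succ, ← ENNReal.tsum_add]
    exact tsum_congr fun z => by rw [ih z, mul_add]

lemma Aop_back (f : V → ℝ≥0∞) :
    ∀ n y, Aop p (n+1) f y = Aop p n (fun z => ∑' u, p z u * f u) y := by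
  intro n
  induction n with
  | zero => intro y; rfl
  | succ n ih =>
    intro y
    rw [Aop_succ, Aop_succ]
    exact tsum_congr fun z => by rw [ih z]

lemma nuop_adjoint (μ0 : V → ℝ≥0∞) :
    ∀ (t : ℕ) (f : V → ℝ≥0∞), ∑' u, nuop p μ0 t u * f u = ∑' z, μ0 z * Aop p t f z := by
  intro t
  induction t with
  | zero => intro f; rfl
  | succ t ih =>
    intro f
    calc ∑' u, nuop p μ0 (t+1) u * f u
        = ∑' u, ∑' z, nuop p μ0 t z * p z u * f u := by
          refine tsum_congr fun u => ?_
          show (∑' z, nuop p μ0 t z * p z u) * f u = _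
          rw [← ENNReal.tsum_mul_right]
      _ = ∑' z, ∑' u, nuop p μ0 t z * p z u * f u := ENNReal.tsum_comm
      _ = ∑' z, nuop p μ0 t z * ∑' u, p z u * f u := by
          refine tsum_congr fun z => ?_
          rw [← ENNReal.tsum_mul_left]
          exact tsum_congr fun u => by ring
      _ = ∑' z, μ0 z * Aop p t (fun w => ∑' u, p w u * f u) z := ih _
      _ = ∑' z, μ0 z * Aop p (t+1) f z := by
          exact tsum_congr fun z => by rw [← Aop_back]

end OpsDefs
section RankEtc
variable {V : Type*}

lemma exists_rank (S : Finset V) {r : V → V → Prop} (hac : ∀ x, ¬ Relation.TransGen r x x) :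
    ∃ rk : V → ℕ, (∀ y ∈ S, rk y < S.card) ∧ ∀ a ∈ S, ∀ b ∈ S, r a b → rk a < rk b := by
  refine ⟨fun y => (S.filter (fun v => Relation.TransGen r v y)).card, ?_, ?_⟩
  · intro y hy
    have hsub : S.filter (fun v => Relation.TransGen r v y) ⊆ S.erase y := by
      intro v hv
      rw [Finset.mem_filter] at hv
      refine Finset.mem_erase.2 ⟨?_, hv.1⟩
      rintro rfl
      exact hac _ hv.2
    exact lt_of_le_of_lt (Finset.card_le_card hsub) (Finset.card_erase_lt_of_mem hy)
  · intro a ha b hb hab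
    apply Finset.card_lt_card
    rw [Finset.ssubset_iff_of_subset]
    · exact ⟨a, Finset.mem_filter.2 ⟨ha, Relation.TransGen.single hab⟩,
        fun h => hac a (Finset.mem_filter.1 h).2⟩
    · intro v hv
      rw [Finset.mem_filter] at hv ⊢
      exact ⟨hv.1, hv.2.tail hab⟩

variable {p : V → V → ℝ≥0∞} {S : Finset V}

lemma Aop_restrict_vanish (rk : V → ℕ)
    (hrk : ∀ a ∈ S, ∀ b ∈ S, p a b ≠ 0 → rk a < rk b)
    (hrkS : ∀ a ∈ S, rk a < S.card) (f : V → ℝ≥0∞) :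
    ∀ (n : ℕ) (x : V), x ∈ S → S.card ≤ n + rk x →
      Aop (fun a b => if b ∈ S then p a b else 0) n f x = 0 := by
  intro n
  induction n with
  | zero =>
    intro x hx hc
    exact absurd hc (by simpa using hrkS x hx)
  | succ n ih =>
    intro x hx hc
    rw [Aop_succ]
    refine (ENNReal.summable.tsum_eq_zero_iff).2 fun z => ?_
    by_cases hzS : z ∈ S
    · rw [if_pos hzS]
      by_cases hpz : p x z = 0
      · rw [hpz, zero_mul]
      · rw [ih z hzS ?_, mul_zero]
        have := hrk x hx z hzS hpz
        omega
    · rw [if_neg hzS, zero_mul]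

lemma Aop_exit (hp : ∀ y, ∑' z, p y z ≤ 1) :
    ∀ (n : ℕ) (y : V), Aop p n (fun _ => 1) y ≤
      Aop (fun a b => if b ∈ S then p a b else 0) n (fun _ => 1) y +
      ∑ t ∈ Finset.range n, Aop (fun a b => if b ∈ S then p a b else 0) t
        (fun u => ∑' v, if v ∈ S then 0 else p u v) y := by
  set pk : V → V → ℝ≥0∞ := fun a b => if b ∈ S then p a b else 0 with hpk
  set g : V → ℝ≥0∞ := fun u => ∑' v, if v ∈ S then 0 else p u v with hg
  intro n
  induction n with
  | zero => intro y; simp [Aop_zero]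
  | succ n ih =>
    intro y
    have hone : ∀ z, Aop p n (fun _ => 1) z ≤ 1 := Aop_le_one hp (fun _ => le_rfl) n
    have hsplit : ∀ z, p y z * Aop p n (fun _ => 1) z =
        (if z ∈ S then p y z * Aop p n (fun _ => 1) z else 0) +
        (if z ∈ S then 0 else p y z * Aop p n (fun _ => 1) z) := by
      intro z; split <;> simp
    rw [Aop_succ, tsum_congr hsplit, ENNReal.tsum_add]
    have hb2 : ∑' z, (if z ∈ S then 0 else p y z * Aop p n (fun _ => 1) z) ≤ g y := by
      refine ENNReal.tsum_le_tsum fun z => ?_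
      split
      · exact le_rfl
      · exact le_trans (mul_le_mul_right (hone z) _) (by rw [mul_one])
    have hb1 : ∑' z, (if z ∈ S then p y z * Aop p n (fun _ => 1) z else 0) ≤
        Aop pk (n+1) (fun _ => 1) y + ∑ t ∈ Finset.range n, Aop pk (t+1) g y := by
      calc ∑' z, (if z ∈ S then p y z * Aop p n (fun _ => 1) z else 0)
          ≤ ∑' z, pk y z * (Aop pk n (fun _ => 1) z + ∑ t ∈ Finset.range n, Aop pk t g z) := by
            refine ENNReal.tsum_le_tsum fun z => ?_
            by_cases hzS : z ∈ S
            · rw [if_pos hzS, hpk]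
              simp only [if_pos hzS]
              exact mul_le_mul_right (ih z) _
            · rw [if_neg hzS, hpk]
              simp [if_neg hzS]
        _ = ∑' z, (pk y z * Aop pk n (fun _ => 1) z + pk y z * ∑ t ∈ Finset.range n, Aop pk t g z) :=
            tsum_congr fun z => mul_add _ _ _
        _ = Aop pk (n+1) (fun _ => 1) y + ∑' z, pk y z * ∑ t ∈ Finset.range n, Aop pk t g z := by
            rw [ENNReal.tsum_add, Aop_succ]
        _ = Aop pk (n+1) (fun _ => 1) y + ∑ t ∈ Finset.range n, Aop pk (t+1) g y := by
            congr 1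
            calc ∑' z, pk y z * ∑ t ∈ Finset.range n, Aop pk t g z
                = ∑' z, ∑ t ∈ Finset.range n, pk y z * Aop pk t g z := by
                  exact tsum_congr fun z => Finset.mul_sum _ _ _
              _ = ∑ t ∈ Finset.range n, ∑' z, pk y z * Aop pk t g z :=
                  Summable.tsum_finsetSum fun i _ => ENNReal.summable
              _ = ∑ t ∈ Finset.range n, Aop pk (t+1) g y := by
                  exact Finset.sum_congr rfl fun t _ => (Aop_succ t g y).symm
    calc _ ≤ (Aop pk (n+1) (fun _ => 1) y + ∑ t ∈ Finset.range n, Aop pk (t+1) g y) + g y :=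
          add_le_add hb1 hb2
      _ = Aop pk (n+1) (fun _ => 1) y + ∑ t ∈ Finset.range (n+1), Aop pk t g y := by
          rw [Finset.sum_range_succ' (fun t => Aop pk t g y) n]
          show _ = Aop pk (n+1) (fun _ => 1) y + (∑ t ∈ Finset.range n, Aop pk (t+1) g y + Aop pk 0 g y)
          rw [add_assoc]
          rfl

end RankEtc
section NuLemmas
variable {V : Type*} {p : V → V → ℝ≥0∞} {S : Finset V} {y : V}

lemma nuop_zero (μ0 : V → ℝ≥0∞) : nuop p μ0 0 = μ0 := rfl

lemma nuop_succ (μ0 : V → ℝ≥0∞) (t : ℕ) (u : V) :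
    nuop p μ0 (t+1) u = ∑' z, nuop p μ0 t z * p z u := rfl

lemma nuop_support (rk : V → ℕ) (hyS : y ∈ S)
    (hrk : ∀ a ∈ S, ∀ b ∈ S, p a b ≠ 0 → rk a < rk b)
    {I : V → ℝ≥0∞} :
    ∀ (t : ℕ) (u : V),
      nuop (fun a b => if b ∈ S then p a b else 0) (fun u => if u = y then I y else 0) t u ≠ 0 →
      u ∈ S ∧ rk y + t ≤ rk u := by
  set pk : V → V → ℝ≥0∞ := fun a b => if b ∈ S then p a b else 0 with hpk
  set μ0 : V → ℝ≥0∞ := fun u => if u = y then I y else 0 with hμ0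
  intro t
  induction t with
  | zero =>
    intro u hu
    have : u = y := by
      by_contra hne
      exact hu (by rw [nuop_zero, hμ0]; simp [hne])
    subst this
    exact ⟨hyS, le_rfl⟩
  | succ t ih =>
    intro u hu
    obtain ⟨z, hz⟩ := tsum_ne_zero_exists hu
    have hν : nuop pk μ0 t z ≠ 0 := fun h => hz (by rw [h, zero_mul])
    have hpk' : pk z u ≠ 0 := fun h => hz (by rw [h, mul_zero])
    have huS : u ∈ S := by
      by_contra huS
      exact hpk' (by simp [hpk, huS])
    have hpzu : p z u ≠ 0 := by
      intro h
      exact hpk' (by simp [hpk, h])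
    obtain ⟨hzS, hrkz⟩ := ih z hν
    have := hrk z hzS u huS hpzu
    exact ⟨huS, by omega⟩

lemma nuop_cumulative {q : V → V → ℝ≥0∞} {I : V → ℝ≥0∞}
    (hpq : ∀ z u, I z * (if u ∈ S then p z u else 0) ≤ q z u)
    (hin : ∀ u, (∑' z, q z u) ≤ I u)
    (hnoret : ∀ t : ℕ,
      nuop (fun a b => if b ∈ S then p a b else 0) (fun u => if u = y then I y else 0) (t+1) y = 0) :
    ∀ (n : ℕ) (u : V),
      ∑ t ∈ Finset.range (n+1),
        nuop (fun a b => if b ∈ S then p a b else 0) (fun u => if u = y then I y else 0) t u ≤ I u := by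
  set pk : V → V → ℝ≥0∞ := fun a b => if b ∈ S then p a b else 0 with hpk
  set μ0 : V → ℝ≥0∞ := fun u => if u = y then I y else 0 with hμ0
  have hμ0le : ∀ u, μ0 u ≤ I u := by
    intro u
    rw [hμ0]
    dsimp only
    split
    · next h => subst h; exact le_rfl
    · exact zero_le
  intro n
  induction n with
  | zero =>
    intro u
    simpa only [zero_add, Finset.range_one, Finset.sum_singleton, nuop_zero] using hμ0le u
  | succ n ih =>
    intro u
    rw [Finset.sum_range_succ' (fun t => nuop pk μ0 t u) (n+1)]
    by_cases huy : u = y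
    · subst huy
      have h0 : ∑ t ∈ Finset.range (n+1), nuop pk μ0 (t+1) u = 0 :=
        Finset.sum_eq_zero fun t _ => hnoret t
      rw [h0, zero_add, nuop_zero]
      exact hμ0le _
    · have h0 : nuop pk μ0 0 u = 0 := by rw [nuop_zero, hμ0]; simp [huy]
      rw [h0, add_zero]
      calc ∑ t ∈ Finset.range (n+1), nuop pk μ0 (t+1) u
          = ∑ t ∈ Finset.range (n+1), ∑' z, nuop pk μ0 t z * pk z u :=
            Finset.sum_congr rfl fun t _ => nuop_succ μ0 t u
        _ = ∑' z, ∑ t ∈ Finset.range (n+1), nuop pk μ0 t z * pk z u :=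
            (Summable.tsum_finsetSum fun i _ => ENNReal.summable).symm
        _ = ∑' z, (∑ t ∈ Finset.range (n+1), nuop pk μ0 t z) * pk z u := by
            exact tsum_congr fun z => (Finset.sum_mul _ _ _).symm
        _ ≤ ∑' z, I z * pk z u := ENNReal.tsum_le_tsum fun z => mul_le_mul_left (ih z) _
        _ ≤ ∑' z, q z u := ENNReal.tsum_le_tsum fun z => hpq z u
        _ ≤ I u := hin u

end NuLemmas
section Core
variable {V : Type*}

lemma ennreal_mul_div_cancel_of_le {a b : ℝ≥0∞} (h : a ≤ b) (hb : b ≠ ∞) :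
    b * (a / b) = a := by
  rcases eq_or_ne b 0 with rfl | hb0
  · have : a = 0 := le_antisymm h (zero_le)
    simp [this]
  · exact ENNReal.mul_div_cancel hb0 hb

lemma core_lemma (q : V → V → ℝ≥0∞) (m I : V → ℝ≥0∞)
    (hfin : ∀ x, I x ≠ ∞)
    (hout : ∀ x, (∑' z, q x z) + m x = I x)
    (hin : ∀ x, (∑' z, q z x) ≤ I x)
    (hacyc : ∀ x, ¬ Relation.TransGen (fun a b => q a b ≠ 0) x x)
    (Vs : ℕ → Finset V) (hVmono : Monotone Vs)
    (hflux : Filter.Tendsto (fun k => ∑ x ∈ Vs k, ∑' v, if v ∈ Vs k then 0 else q x v)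
      Filter.atTop (nhds 0))
    (y : V) (hky : ∃ k, y ∈ Vs k) (hy : I y ≠ 0) :
    ∑' n, Aop (fun a b => q a b / I a) n (fun x => m x / I x) y = 1 := by
  set p : V → V → ℝ≥0∞ := fun a b => q a b / I a with hp
  set dd : V → ℝ≥0∞ := fun x => m x / I x with hdd
  have hqIl : ∀ a b, q a b ≤ I a := fun a b =>
    le_trans (ENNReal.le_tsum b) (by rw [← hout a]; exact le_self_add)
  have hqIr : ∀ a b, q a b ≤ I b := fun a b => le_trans (ENNReal.le_tsum a) (hin b)
  have hpsum : ∀ a, (∑' z, p a z) ≤ 1 := by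
    intro a
    have h1 : ∑' z, p a z = (∑' z, q a z) / I a := by
      rw [hp]
      simp only [div_eq_mul_inv]
      exact ENNReal.tsum_mul_right
    rw [h1]
    calc (∑' z, q a z) / I a ≤ I a / I a :=
          ENNReal.div_le_div_right (by rw [← hout a]; exact le_self_add) _
      _ ≤ 1 := ENNReal.div_self_le_one
  have hpq0 : ∀ a b, p a b ≠ 0 → q a b ≠ 0 := by
    intro a b h h0
    exact h (by rw [hp]; simp only; rw [h0, ENNReal.zero_div])
  have hIz : ∀ a b, p a b ≠ 0 → I b ≠ 0 := by
    intro a b h h0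
    exact hpq0 a b h (le_antisymm (h0 ▸ hqIr a b) (zero_le))
  have hbase : ∀ x, I x ≠ 0 → (∑' z, p x z) + dd x = 1 := by
    intro x hx
    have h1 : ∑' z, p x z = (∑' z, q x z) / I x := by
      rw [hp]
      simp only [div_eq_mul_inv]
      exact ENNReal.tsum_mul_right
    rw [h1, hdd]
    simp only
    rw [ENNReal.div_add_div_same, hout x, ENNReal.div_self hx (hfin x)]
  have hcons : ∀ n x, I x ≠ 0 →
      Aop p n (fun _ => 1) x = Aop p n dd x + Aop p (n+1) (fun _ => 1) x := by
    intro n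
    induction n with
    | zero =>
      intro x hx
      show (1:ℝ≥0∞) = dd x + ∑' z, p x z * Aop p 0 (fun _ => 1) z
      have : ∑' z, p x z * Aop p 0 (fun _ => 1) z = ∑' z, p x z := by
        exact tsum_congr fun z => by rw [Aop_zero]; exact mul_one _
      rw [this, add_comm, ← hbase x hx]
    | succ n ih =>
      intro x _
      have hterm : ∀ z, p x z * Aop p n (fun _ => 1) z
          = p x z * Aop p n dd z + p x z * Aop p (n+1) (fun _ => 1) z := by
        intro z
        by_cases h0 : p x z = 0
        · simp [h0]
        · rw [ih z (hIz x z h0), mul_add]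
      rw [Aop_succ, tsum_congr hterm, ENNReal.tsum_add, ← Aop_succ, ← Aop_succ]
  have htele : ∀ n, (∑ i ∈ Finset.range n, Aop p i dd y) + Aop p n (fun _ => 1) y = 1 := by
    intro n
    induction n with
    | zero => simp [Aop_zero]
    | succ n ih =>
      rw [Finset.sum_range_succ, add_assoc, ← hcons n y hy, ih]
  set T := ∑' i, Aop p i dd y with hT
  have hT1 : T ≤ 1 :=
    Summable.tsum_le_of_sum_range_le ENNReal.summable fun n => by rw [← htele n]; exact le_self_add
  obtain ⟨k₀, hk₀⟩ := hky
  have hest : ∀ k, y ∈ Vs k →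
      I y * Aop p ((Vs k).card) (fun _ => 1) y ≤
        ∑ x ∈ Vs k, ∑' v, if v ∈ Vs k then 0 else q x v := by
    intro k hyk
    set S := Vs k with hS
    set n := S.card with hn
    have hacp : ∀ x, ¬ Relation.TransGen (fun a b => p a b ≠ 0) x x := fun x hx =>
      hacyc x (Relation.TransGen.mono (fun a b h => hpq0 a b h) _ _ hx)
    obtain ⟨rk, hrkS, hrk⟩ := exists_rank S hacp
    set pk : V → V → ℝ≥0∞ := fun a b => if b ∈ S then p a b else 0 with hpkdef
    set g : V → ℝ≥0∞ := fun u => ∑' v, if v ∈ S then 0 else p u v with hgdef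
    set μ0 : V → ℝ≥0∞ := fun u => if u = y then I y else 0 with hμ0def
    have hexit := Aop_exit (S := S) hpsum n y
    have hvan := Aop_restrict_vanish (S := S) rk hrk hrkS (fun _ => 1) n y hyk
      (Nat.le_add_right _ _)
    rw [hvan, zero_add] at hexit
    have hsupp : ∀ t u, nuop pk μ0 t u ≠ 0 → u ∈ S :=
      fun t u h => (nuop_support (I := I) rk hyk hrk t u h).1
    have hnoret : ∀ t, nuop pk μ0 (t+1) y = 0 := by
      intro t
      by_contra h
      have h2 := (nuop_support (I := I) rk hyk hrk (t+1) y h).2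
      omega
    have hpqk : ∀ z u, I z * (if u ∈ S then p z u else 0) ≤ q z u := by
      intro z u
      split
      · exact le_trans (le_of_eq rfl) ENNReal.mul_div_le
      · rw [mul_zero]; exact zero_le
    have hcum := nuop_cumulative (S := S) (y := y) hpqk hin hnoret
    have hadj : ∀ (t : ℕ) (f : V → ℝ≥0∞), ∑' u, nuop pk μ0 t u * f u = I y * Aop pk t f y := by
      intro t f
      rw [nuop_adjoint]
      rw [tsum_eq_single y]
      · rw [hμ0def]; simp
      · intro z hz
        rw [hμ0def]
        simp [hz]
    have hcard1 : 1 ≤ n := Finset.card_pos.2 ⟨y, hyk⟩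
    calc I y * Aop p n (fun _ => 1) y
        ≤ I y * ∑ t ∈ Finset.range n, Aop pk t g y := mul_le_mul_right hexit _
      _ = ∑ t ∈ Finset.range n, I y * Aop pk t g y := Finset.mul_sum _ _ _
      _ = ∑ t ∈ Finset.range n, ∑' u, nuop pk μ0 t u * g u :=
          Finset.sum_congr rfl fun t _ => (hadj t g).symm
      _ = ∑' u, ∑ t ∈ Finset.range n, nuop pk μ0 t u * g u :=
          (Summable.tsum_finsetSum fun i _ => ENNReal.summable).symm
      _ = ∑' u, (∑ t ∈ Finset.range n, nuop pk μ0 t u) * g u :=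
          tsum_congr fun u => (Finset.sum_mul _ _ _).symm
      _ ≤ ∑' u, (if u ∈ S then I u else 0) * g u := by
          refine ENNReal.tsum_le_tsum fun u => ?_
          by_cases huS : u ∈ S
          · rw [if_pos huS]
            refine mul_le_mul_left ?_ _
            have hrw : n = (n - 1) + 1 := by omega
            rw [hrw]
            exact hcum (n-1) u
          · rw [if_neg huS]
            have : ∑ t ∈ Finset.range n, nuop pk μ0 t u = 0 :=
              Finset.sum_eq_zero fun t _ => by
                by_contra h
                exact huS (hsupp t u h)
            rw [this, zero_mul]
      _ ≤ ∑' u, (if u ∈ S then ∑' v, if v ∈ S then 0 else q u v else 0) := by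
          refine ENNReal.tsum_le_tsum fun u => ?_
          by_cases huS : u ∈ S
          · rw [if_pos huS, if_pos huS, hgdef]
            simp only
            rw [← ENNReal.tsum_mul_left]
            refine ENNReal.tsum_le_tsum fun v => ?_
            by_cases hvS : v ∈ S
            · simp [hvS]
            · rw [if_neg hvS, if_neg hvS, hp]
              exact ENNReal.mul_div_le
          · rw [if_neg huS, if_neg huS, zero_mul]
      _ = ∑ x ∈ S, ∑' v, if v ∈ S then 0 else q x v := by
          rw [tsum_eq_sum (s := S) (fun u hu => by rw [if_neg hu])]
          exact Finset.sum_congr rfl fun u hu => by rw [if_pos hu]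
  have hkey : ∀ k, k ≥ k₀ → I y ≤ I y * T + ∑ x ∈ Vs k, ∑' v, if v ∈ Vs k then 0 else q x v := by
    intro k hk
    have hyk : y ∈ Vs k := hVmono hk hk₀
    calc I y = I y * ((∑ i ∈ Finset.range (Vs k).card, Aop p i dd y)
            + Aop p ((Vs k).card) (fun _ => 1) y) := by rw [htele, mul_one]
      _ = I y * (∑ i ∈ Finset.range (Vs k).card, Aop p i dd y)
            + I y * Aop p ((Vs k).card) (fun _ => 1) y := mul_add _ _ _
      _ ≤ I y * T + ∑ x ∈ Vs k, ∑' v, if v ∈ Vs k then 0 else q x v :=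
          add_le_add (mul_le_mul_right (ENNReal.sum_le_tsum _) _) (hest k hyk)
  have htend : Filter.Tendsto
      (fun k => I y * T + ∑ x ∈ Vs k, ∑' v, if v ∈ Vs k then 0 else q x v)
      Filter.atTop (nhds (I y * T)) := by
    have h2 := Filter.Tendsto.const_add (I y * T) hflux
    simpa using h2
  have hle : I y ≤ I y * T := ge_of_tendsto htend (Filter.eventually_atTop.2 ⟨k₀, hkey⟩)
  have h1T : (1:ℝ≥0∞) ≤ T := by
    rw [← ENNReal.mul_le_mul_iff_right hy (hfin y)]
    simpa [mul_one] using hle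
  exact le_antisymm hT1 h1T

end Core
section ListSums
variable {V : Type*}

noncomputable def ind (P : Prop) (x : ℝ≥0∞) : ℝ≥0∞ := if P then x else 0

lemma ind_pos {P : Prop} (h : P) (x : ℝ≥0∞) : ind P x = x := if_pos h
lemma ind_neg {P : Prop} (h : ¬ P) (x : ℝ≥0∞) : ind P x = 0 := if_neg h
lemma ind_ne_zero {P : Prop} {x : ℝ≥0∞} (h : ind P x ≠ 0) : P ∧ x ≠ 0 := by
  by_cases hP : P
  · exact ⟨hP, by rwa [ind_pos hP] at h⟩
  · exact absurd (ind_neg hP x) h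
lemma ind_mul_left (P : Prop) (a x : ℝ≥0∞) : ind P (a * x) = a * ind P x := by
  by_cases hP : P <;> simp [ind, hP]
lemma ind_ind (P Q : Prop) (x : ℝ≥0∞) : ind P (ind Q x) = ind (P ∧ Q) x := by
  by_cases hP : P <;> by_cases hQ : Q <;> simp [ind, hP, hQ]
lemma ind_congr {P Q : Prop} (h : P ↔ Q) (x : ℝ≥0∞) : ind P x = ind Q x := by
  by_cases hP : P
  · rw [ind_pos hP, ind_pos (h.1 hP)]
  · rw [ind_neg hP, ind_neg (fun hQ => hP (h.2 hQ))]
lemma ind_mono {P : Prop} {x y : ℝ≥0∞} (h : x ≤ y) : ind P x ≤ ind P y := by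
  by_cases hP : P <;> simp [ind, hP, h]

noncomputable def HF (p : V → V → ℝ≥0∞) (dd : V → ℝ≥0∞) (y : V) : ℝ≥0∞ :=
  ∑' l : List V, ind (l.head? = some y) (wgt p l * endw dd l)

noncomputable def RB (p : V → V → ℝ≥0∞) (m : V → ℝ≥0∞) (x : V) : ℝ≥0∞ :=
  ∑' l : List V, ind (l.getLast? = some x) (headw m l * wgt p l)

lemma tsum_fiber' {α ι : Type*} (F : α → ℝ≥0∞) (k : α → ι) :
    ∑' a, F a = ∑' (i : ι), ∑' a, ind (k a = i) (F a) := by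
  rw [ENNReal.tsum_comm]
  refine tsum_congr fun a => ?_
  rw [tsum_eq_single (k a) (fun i hi => ind_neg (fun h => hi h.symm) _), ind_pos rfl]

lemma tsum_list_nonnil (F : List V → ℝ≥0∞) (h0 : F [] = 0) :
    ∑' l, F l = ∑' n : ℕ, ∑' l, ind (l.length = n + 1) (F l) := by
  rw [tsum_fiber' F List.length]
  have hzero : ∑' l : List V, ind (l.length = 0) (F l) = 0 := by
    rw [ENNReal.summable.tsum_eq_zero_iff]
    intro l
    cases l with
    | nil => simp [ind, h0]
    | cons a t => exact ind_neg (by simp) _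
  refine (Function.Injective.tsum_eq
    (f := fun n => ∑' l : List V, ind (l.length = n) (F l)) Nat.succ_injective ?_).symm
  intro n hn
  rcases n with _ | n
  · exact absurd hzero hn
  · exact ⟨n, rfl⟩

lemma tsum_list_head (F : List V → ℝ≥0∞) (h0 : F [] = 0) :
    ∑' l, F l = ∑' z : V, ∑' l, ind (l.head? = some z) (F l) := by
  rw [tsum_fiber' F List.head?]
  have hzero : ∑' l : List V, ind (l.head? = none) (F l) = 0 := by
    rw [ENNReal.summable.tsum_eq_zero_iff]
    intro l
    cases l with
    | nil => simp [ind, h0]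
    | cons a t => exact ind_neg (by simp) _
  refine (Function.Injective.tsum_eq
    (f := fun o => ∑' l : List V, ind (l.head? = o) (F l)) (Option.some_injective V) ?_).symm
  intro o ho
  rcases o with _ | z
  · exact absurd hzero ho
  · exact ⟨z, rfl⟩

lemma tsum_list_cons (y : V) (F : List V → ℝ≥0∞) (h : ∀ l, F l ≠ 0 → ∃ t, l = y :: t) :
    ∑' l, F l = ∑' t : List V, F (y :: t) := by
  refine (Function.Injective.tsum_eq (g := fun t : List V => y :: t) ?_ ?_).symm
  · intro a b hab
    simpa using hab
  · intro l hl
    obtain ⟨t, rfl⟩ := h l hl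
    exact ⟨t, rfl⟩

lemma endw_cons {dd : V → ℝ≥0∞} (a : V) {t : List V} (ht : t ≠ []) :
    endw dd (a :: t) = endw dd t := by
  unfold endw
  rw [List.getLast?_eq_getLast ht, List.getLast?_eq_getLast (by simp : (a :: t) ≠ []),
    List.getLast_cons ht]

lemma head?_cases {z : V} {l : List V} (h : l.head? = some z) : ∃ t, l = z :: t := by
  cases l with
  | nil => simp at h
  | cons a t =>
    have : a = z := by simpa using h
    exact ⟨t, by rw [this]⟩

lemma head_eq_of_head? {z : V} {l : List V} (h : l.head? = some z) (hl : l ≠ []) :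
    l.head hl = z := by
  rwa [List.head?_eq_head hl, Option.some.injEq] at h

lemma HF_eq (p : V → V → ℝ≥0∞) (dd : V → ℝ≥0∞) (y : V) :
    HF p dd y = ∑' n, Aop p n dd y := by
  unfold HF
  rw [tsum_list_nonnil _ (ind_neg (by simp) _)]
  refine tsum_congr ?_
  intro n
  induction n generalizing y with
  | zero =>
    rw [Aop_zero]
    rw [tsum_eq_single [y]]
    · rw [ind_pos (by simp), ind_pos (by simp), wgt_singleton, one_mul]
      unfold endw
      simp
    · intro l hl
      by_cases h1 : l.length = 0 + 1
      · rcases l with _ | ⟨a, t⟩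
        · simp at h1
        · have : t = [] := by simpa using h1
          subst this
          by_cases h2 : a = y
          · exact absurd (h2 ▸ rfl) hl
          · rw [ind_pos h1, ind_neg (by simpa using h2)]
      · exact ind_neg h1 _
  | succ n ih =>
    have hsup : ∀ l : List V,
        ind (l.length = n + 1 + 1) (ind (l.head? = some y) (wgt p l * endw dd l)) ≠ 0
        → ∃ t, l = y :: t := by
      intro l hl
      exact head?_cases (ind_ne_zero (ind_ne_zero hl).2).1
    calc ∑' l, ind (l.length = n + 1 + 1) (ind (l.head? = some y) (wgt p l * endw dd l))
        = ∑' t : List V, ind ((y :: t).length = n + 1 + 1)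
            (ind ((y :: t).head? = some y) (wgt p (y :: t) * endw dd (y :: t))) :=
          tsum_list_cons y _ hsup
      _ = ∑' t : List V, ind (t.length = n + 1) (wgt p (y :: t) * endw dd (y :: t)) := by
          refine tsum_congr fun t => ?_
          rw [ind_ind]
          exact ind_congr (by simp) _
      _ = ∑' z, ∑' t : List V, ind (t.head? = some z)
            (ind (t.length = n + 1) (wgt p (y :: t) * endw dd (y :: t))) :=
          tsum_list_head _ (ind_neg (by simp) _)
      _ = ∑' z, p y z * ∑' t : List V, ind (t.head? = some z)
            (ind (t.length = n + 1) (wgt p t * endw dd t)) := by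
          refine tsum_congr fun z => ?_
          rw [← ENNReal.tsum_mul_left]
          refine tsum_congr fun t => ?_
          by_cases h1 : t.head? = some z
          · by_cases h2 : t.length = n + 1
            · have ht : t ≠ [] := by rintro rfl; simp at h1
              rw [ind_pos h1, ind_pos h2, ind_pos h1, ind_pos h2,
                wgt_cons y ht, endw_cons y ht, head_eq_of_head? h1 ht, mul_assoc]
            · rw [ind_pos h1, ind_neg h2, ind_pos h1, ind_neg h2, mul_zero]
          · rw [ind_neg h1, ind_neg h1, mul_zero]
      _ = ∑' z, p y z * ∑' t : List V, ind (t.length = n + 1)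
            (ind (t.head? = some z) (wgt p t * endw dd t)) := by
          refine tsum_congr fun z => ?_
          congr 1
          refine tsum_congr fun t => ?_
          rw [ind_ind, ind_ind]
          exact ind_congr (by simp [and_comm]) _
      _ = ∑' z, p y z * Aop p n dd z := by
          refine tsum_congr fun z => ?_
          rw [ih z]
      _ = Aop p (n+1) dd y := (Aop_succ n dd y).symm

end ListSums
section Reversal
variable {V : Type*}

lemma getLast_reverse' {l : List V} (h : l.reverse ≠ []) (h' : l ≠ []) :
    l.reverse.getLast h = l.head h' := by
  have h1 : l.reverse.getLast? = some (l.reverse.getLast h) := List.getLast?_eq_getLast h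
  rw [List.getLast?_reverse, List.head?_eq_head h'] at h1
  exact (Option.some.injEq _ _ ▸ h1 : _ = _).symm

lemma claim_star (q : V → V → ℝ≥0∞) (I : V → ℝ≥0∞)
    (hfin : ∀ v, I v ≠ ∞) (hl : ∀ a b, q a b ≤ I a) (hr : ∀ a b, q a b ≤ I b) :
    ∀ (l : List V) (hne : l ≠ []),
      I (l.head hne) * wgt (fun a b => q b a / I a) l
        = I (l.getLast hne) * wgt (fun a b => q a b / I a) l.reverse := by
  intro l
  induction l with
  | nil => intro hne; exact absurd rfl hne
  | cons x l'' ih =>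
    intro hne
    rcases eq_or_ne l'' [] with rfl | hl''
    · simp [wgt_singleton]
    · have hrevne : l''.reverse ≠ [] := by simpa using hl''
      have hrw : (x :: l'').reverse = l''.reverse ++ [x] := by simp
      have hhead : (x :: l'').head hne = x := rfl
      have hlast : (x :: l'').getLast hne = l''.getLast hl'' := List.getLast_cons hl''
      set u := l''.head hl'' with hu
      have hwl : wgt (fun a b => q b a / I a) (x :: l'')
          = (q u x / I x) * wgt (fun a b => q b a / I a) l'' := wgt_cons x hl''
      have hwr : wgt (fun a b => q a b / I a) ((x :: l'').reverse)
          = wgt (fun a b => q a b / I a) l''.reverse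
            * ((q u x / I u) * wgt (fun a b => q a b / I a) [x]) := by
        rw [hrw, wgt_append hrevne (by simp : ([x] : List V) ≠ [])]
        congr 2
        · exact congrArg (fun w => q w x / I w) (getLast_reverse' hrevne hl'')
      have hkey : I x * (q u x / I x) = I u * (q u x / I u) := by
        rw [ennreal_mul_div_cancel_of_le (hr u x) (hfin x),
          ennreal_mul_div_cancel_of_le (hl u x) (hfin u)]
      calc I ((x :: l'').head hne) * wgt (fun a b => q b a / I a) (x :: l'')
          = (I x * (q u x / I x)) * wgt (fun a b => q b a / I a) l'' := by
            rw [hhead, hwl, mul_assoc]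
        _ = (q u x / I u) * (I u * wgt (fun a b => q b a / I a) l'') := by
            rw [hkey]; ring
        _ = (q u x / I u) * (I (l''.getLast hl'') * wgt (fun a b => q a b / I a) l''.reverse) := by
            rw [ih hl'']
        _ = I ((x :: l'').getLast hne) * wgt (fun a b => q a b / I a) ((x :: l'').reverse) := by
            rw [hlast, hwr, wgt_singleton]
            ring

lemma headw_reverse (m : V → ℝ≥0∞) (l : List V) : headw m l.reverse = endw m l := by
  unfold headw endw
  rw [List.head?_reverse]

lemma endw_reverse (m : V → ℝ≥0∞) (l : List V) : endw m l.reverse = headw m l := by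
  unfold headw endw
  rw [List.getLast?_reverse]

lemma RB_eq (q : V → V → ℝ≥0∞) (I m₁ : V → ℝ≥0∞)
    (hfin : ∀ v, I v ≠ ∞) (hl : ∀ a b, q a b ≤ I a) (hr : ∀ a b, q a b ≤ I b)
    (hm : ∀ a, m₁ a ≤ I a) (x : V) :
    RB (fun a b => q a b / I a) m₁ x
      = I x * HF (fun a b => q b a / I a) (fun u => m₁ u / I u) x := by
  unfold RB HF
  rw [← ENNReal.tsum_mul_left]
  rw [← (Function.Involutive.toPerm _ List.reverse_reverse).tsum_eq
    (f := fun l : List V => ind (l.getLast? = some x)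
      (headw m₁ l * wgt (fun a b => q a b / I a) l))]
  refine tsum_congr fun l => ?_
  show ind (l.reverse.getLast? = some x) (headw m₁ l.reverse * wgt (fun a b => q a b / I a) l.reverse)
      = I x * ind (l.head? = some x) (wgt (fun a b => q b a / I a) l * endw (fun u => m₁ u / I u) l)
  rw [List.getLast?_reverse, headw_reverse]
  by_cases hh : l.head? = some x
  · have hne : l ≠ [] := by rintro rfl; simp at hh
    have hhead : l.head hne = x := head_eq_of_head? hh hne
    rw [ind_pos hh, ind_pos hh]
    set L := l.getLast hne with hL
    have hend : endw m₁ l = m₁ L := endw_eq hne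
    have hddR : endw (fun u => m₁ u / I u) l = m₁ L / I L := endw_eq hne
    have hclaim := claim_star q I hfin hl hr l hne
    rw [hhead] at hclaim
    rw [hend, hddR]
    calc m₁ L * wgt (fun a b => q a b / I a) l.reverse
        = (I L * (m₁ L / I L)) * wgt (fun a b => q a b / I a) l.reverse := by
          rw [ennreal_mul_div_cancel_of_le (hm L) (hfin L)]
      _ = (I L * wgt (fun a b => q a b / I a) l.reverse) * (m₁ L / I L) := by ring
      _ = (I x * wgt (fun a b => q b a / I a) l) * (m₁ L / I L) := by rw [← hclaim]
      _ = I x * (wgt (fun a b => q b a / I a) l * (m₁ L / I L)) := by ring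
  · rw [ind_neg hh, ind_neg hh, mul_zero]

end Reversal
section Split
variable {V : Type*}

lemma split_edge (p : V → V → ℝ≥0∞) (m dd : V → ℝ≥0∞)
    (hacyc : ∀ v, ¬ Relation.TransGen (fun a b => p a b ≠ 0) v v)
    (x y : V) (hpxy : p x y ≠ 0) :
    ∑' l : List V, ind ((x, y) ∈ pathEdges l) (headw m l * wgt p l * endw dd l)
      = RB p m x * (p x y * HF p dd y) := by
  classical
  set A : List V → ℝ≥0∞ := fun a => ind (a.getLast? = some x) (headw m a * wgt p a) with hA
  set B : List V → ℝ≥0∞ := fun b => ind (b.head? = some y) (wgt p b * endw dd b) with hB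
  set g : List V × List V → ℝ≥0∞ := fun ab => A ab.1 * (p x y * B ab.2) with hg
  have hRHS : ∑' ab : List V × List V, g ab = RB p m x * (p x y * HF p dd y) := by
    rw [ENNReal.tsum_prod']
    calc ∑' a, ∑' b, A a * (p x y * B b)
        = ∑' a, A a * (p x y * ∑' b, B b) := by
          refine tsum_congr fun a => ?_
          rw [ENNReal.tsum_mul_left, ENNReal.tsum_mul_left]
      _ = RB p m x * (p x y * HF p dd y) := by
          rw [ENNReal.tsum_mul_right]
          rfl
  rw [← hRHS]
  -- facts about support elements
  have hfacts : ∀ a b : List V, g (a, b) ≠ 0 →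
      (a.getLast? = some x) ∧ (b.head? = some y) ∧ headw m a ≠ 0 ∧ wgt p a ≠ 0 ∧
      wgt p b ≠ 0 ∧ endw dd b ≠ 0 := by
    intro a b hab
    have h1 : A a ≠ 0 := fun h => hab (by rw [hg]; show A a * _ = 0; rw [h, zero_mul])
    have h2 : B b ≠ 0 := fun h => hab (by rw [hg]; show A a * (p x y * B b) = 0; rw [h, mul_zero, mul_zero])
    obtain ⟨ha1, ha2⟩ := ind_ne_zero h1
    obtain ⟨hb1, hb2⟩ := ind_ne_zero h2
    refine ⟨ha1, hb1, ?_, ?_, ?_, ?_⟩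
    · intro h; exact ha2 (by rw [h, zero_mul])
    · intro h; exact ha2 (by rw [h, mul_zero])
    · intro h; exact hb2 (by rw [h, zero_mul])
    · intro h; exact hb2 (by rw [h, mul_zero])
  have hnodup : ∀ a b : List V, g (a, b) ≠ 0 → (a ++ b).Nodup := by
    intro a b hab
    obtain ⟨ha1, hb1, _, ha4, hb5, _⟩ := hfacts a b hab
    refine chain'_nodup hacyc (List.isChain_append.2 ⟨wgt_ne_zero_chain ha4, wgt_ne_zero_chain hb5, ?_⟩)
    intro u hu v hv
    rw [ha1] at hu
    rw [hb1] at hv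
    simp only [Option.mem_def, Option.some.injEq] at hu hv
    subst hu
    subst hv
    exact hpxy
  have hmemx : ∀ a : List V, a.getLast? = some x → x ∈ a := by
    intro a ha
    have hane : a ≠ [] := by rintro rfl; simp at ha
    have hx : a.getLast hane = x := by
      rw [List.getLast?_eq_getLast hane] at ha
      simpa using ha
    exact hx ▸ List.getLast_mem hane
  refine tsum_eq_tsum_of_ne_zero_bij (fun ab => ab.1.1 ++ ab.1.2) ?_ ?_ ?_
  · -- injectivity on support
    rintro ⟨⟨a₁, b₁⟩, hab₁⟩ ⟨⟨a₂, b₂⟩, hab₂⟩ h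
    replace h : a₁ ++ b₁ = a₂ ++ b₂ := h
    simp only [Function.mem_support] at hab₁ hab₂
    obtain ⟨ha₁, hb₁, -, -, -, -⟩ := hfacts a₁ b₁ hab₁
    obtain ⟨ha₂, hb₂, -, -, -, -⟩ := hfacts a₂ b₂ hab₂
    have hnd := hnodup a₁ b₁ hab₁
    have key : a₁ = a₂ := by
      rcases List.append_eq_append_iff.1 h with ⟨c, hc1, hc2⟩ | ⟨c, hc1, hc2⟩
      · -- a₂ = a₁ ++ c, b₁ = c ++ b₂
        rcases eq_or_ne c [] with rfl | hc
        · rw [hc1, List.append_nil]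
        · exfalso
          have hxc : x ∈ c := by
            apply hmemx
            rw [List.getLast?_eq_getLast hc]
            rw [hc1, List.getLast?_append, List.getLast?_eq_getLast hc] at ha₂
            exact ha₂
          have hxa : x ∈ a₁ := hmemx _ ha₁
          have hxb : x ∈ b₁ := by rw [hc2]; exact List.mem_append_left _ hxc
          exact (List.nodup_append.1 hnd).2.2 x hxa x hxb rfl
      · -- a₁ = a₂ ++ c, b₂ = c ++ b₁
        rcases eq_or_ne c [] with rfl | hc
        · rw [hc1, List.append_nil]
        · exfalso
          have hnd2 := hnodup a₂ b₂ hab₂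
          have hxc : x ∈ c := by
            apply hmemx
            rw [List.getLast?_eq_getLast hc]
            rw [hc1, List.getLast?_append, List.getLast?_eq_getLast hc] at ha₁
            exact ha₁
          have hxa : x ∈ a₂ := hmemx _ ha₂
          have hxb : x ∈ b₂ := by rw [hc2]; exact List.mem_append_left _ hxc
          exact (List.nodup_append.1 hnd2).2.2 x hxa x hxb rfl
    have key2 : b₁ = b₂ := by
      rw [key] at h
      exact List.append_cancel_left h
    simp [key, key2]
  · -- support f ⊆ range
    intro l hl
    simp only [Function.mem_support] at hl
    have hmem : (x, y) ∈ pathEdges l := (ind_ne_zero hl).1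
    have hval : headw m l * wgt p l * endw dd l ≠ 0 := (ind_ne_zero hl).2
    obtain ⟨a₀, b₀, rfl⟩ := mem_pathEdges_iff.1 hmem
    set a : List V := a₀ ++ [x] with ha
    set b : List V := y :: b₀ with hb
    have hab : a₀ ++ x :: y :: b₀ = a ++ b := by simp [ha, hb]
    have hane : a ≠ [] := by simp [ha]
    have hbne : b ≠ [] := by simp [hb]
    have hga : a.getLast? = some x := by rw [ha]; exact List.getLast?_concat
    have hhb : b.head? = some y := rfl
    have hhead : (a ++ b).head? = a.head? := by
      rw [List.head?_append, List.head?_eq_head hane]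
      rfl
    have hlast : (a ++ b).getLast? = b.getLast? := by
      rw [List.getLast?_append, List.getLast?_eq_getLast hbne]
      rfl
    have hax : a.getLast hane = x := by
      rw [List.getLast?_eq_getLast hane] at hga
      simpa using hga
    have hby : b.head hbne = y := by
      rw [List.head?_eq_head hbne] at hhb
      simpa using hhb
    have hwgt : wgt p (a ++ b) = wgt p a * (p x y * wgt p b) := by
      rw [wgt_append hane hbne, hax, hby]
    rw [hab] at hval
    have hheadw : headw m (a ++ b) = headw m a := by unfold headw; rw [hhead]
    have hendw : endw dd (a ++ b) = endw dd b := by unfold endw; rw [hlast]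
    have : g (a, b) ≠ 0 := by
      rw [hg]
      show A a * (p x y * B b) ≠ 0
      rw [hA, hB]
      show ind _ _ * (p x y * ind _ _) ≠ 0
      rw [ind_pos hga, ind_pos hhb]
      intro hzero
      apply hval
      rw [hheadw, hendw, hwgt] at hval ⊢
      rcases mul_eq_zero.1 hzero with h1 | h1
      · rcases mul_eq_zero.1 h1 with h2 | h2 <;> simp [h2]
      · rcases mul_eq_zero.1 h1 with h2 | h2
        · simp [h2]
        · rcases mul_eq_zero.1 h2 with h3 | h3 <;> simp [h3]
    exact ⟨⟨(a, b), this⟩, hab.symm⟩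
  · -- values agree
    rintro ⟨⟨a, b⟩, hab⟩
    simp only [Function.mem_support] at hab
    obtain ⟨ha1, hb1, -, -, -, -⟩ := hfacts a b hab
    have hane : a ≠ [] := by rintro rfl; simp at ha1
    have hbne : b ≠ [] := by rintro rfl; simp at hb1
    have hhead : (a ++ b).head? = a.head? := by
      rw [List.head?_append, List.head?_eq_head hane]
      rfl
    have hlast : (a ++ b).getLast? = b.getLast? := by
      rw [List.getLast?_append, List.getLast?_eq_getLast hbne]
      rfl
    have hax : a.getLast hane = x := by
      rw [List.getLast?_eq_getLast hane] at ha1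
      simpa using ha1
    have hby : b.head hbne = y := by
      rw [List.head?_eq_head hbne] at hb1
      simpa using hb1
    have hwgt : wgt p (a ++ b) = wgt p a * (p x y * wgt p b) := by
      rw [wgt_append hane hbne, hax, hby]
    have hmem : (x, y) ∈ pathEdges (a ++ b) := by
      rw [mem_pathEdges_iff]
      obtain ⟨t, hbt⟩ := head?_cases hb1
      refine ⟨a.dropLast, t, ?_⟩
      conv_lhs => rw [← List.dropLast_append_getLast hane, hbt, hax]
      simp [List.append_assoc]
    show ind ((x, y) ∈ pathEdges (a ++ b)) (headw m (a ++ b) * wgt p (a ++ b) * endw dd (a ++ b)) = _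
    rw [ind_pos hmem]
    show _ = A a * (p x y * B b)
    rw [hA, hB]
    show _ = ind _ _ * (p x y * ind _ _)
    rw [ind_pos ha1, ind_pos hb1]
    have hheadw : headw m (a ++ b) = headw m a := by unfold headw; rw [hhead]
    have hendw : endw dd (a ++ b) = endw dd b := by unfold endw; rw [hlast]
    rw [hheadw, hendw, hwgt]
    ring

lemma total_mass (p : V → V → ℝ≥0∞) (m dd : V → ℝ≥0∞) :
    ∑' l : List V, headw m l * wgt p l * endw dd l = ∑' z, m z * HF p dd z := by
  rw [tsum_list_head _ (by unfold headw; simp)]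
  refine tsum_congr fun z => ?_
  unfold HF
  rw [← ENNReal.tsum_mul_left]
  refine tsum_congr fun l => ?_
  by_cases hh : l.head? = some z
  · have hne : l ≠ [] := by rintro rfl; simp at hh
    rw [ind_pos hh, ind_pos hh, headw_eq hne, head_eq_of_head? hh hne, mul_assoc]
  · rw [ind_neg hh, ind_neg hh, mul_zero]

end Split

end Aux

/-- **Zero flux towards infinity implies finite decomposability.**
An acyclic flow `Q` on an infinite countable digraph with `div Q = μ₁ - μ₂` and zero flux
towards infinity is finitely decomposable. -/
theorem zero_flux_finitely_decomposable {V : Type*} [Countable V] [Infinite V]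
    (E : Set (V × V)) (hloop : ∀ x : V, (x, x) ∉ E)
    (Q : V × V → ℝ) (hQ : IsFlow E Q)
    (hacyc : AcyclicRel fun a b => 0 < Q (a, b))
    (μ₁ μ₂ : V → ℝ) (h₁ : IsProb μ₁) (h₂ : IsProb μ₂)
    (hout : ∀ x, Summable fun y => Q (x, y)) (hin : ∀ x, Summable fun y => Q (y, x))
    (hdiv : ∀ x, divergence Q x = μ₁ x - μ₂ x)
    (Vs : ℕ → Finset V) (hVmono : ∀ n, Vs n ⊆ Vs (n + 1)) (hVcover : ∀ x : V, ∃ n, x ∈ Vs n)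
    (hfluxsum : ∀ n, Summable fun p : V × V =>
      Set.indicator {p : V × V | p.1 ∈ Vs n ∧ p.2 ∉ Vs n} Q p)
    (hflux : Filter.Tendsto (fun n => ∑' p : V × V,
        Set.indicator {p : V × V | p.1 ∈ Vs n ∧ p.2 ∉ Vs n} Q p)
      Filter.atTop (nhds 0)) :
    FinDecomposable E Q := by
  obtain ⟨v₀⟩ : Nonempty V := inferInstance
  have hVmono' : Monotone Vs := monotone_nat_of_le_succ fun n => Finset.le_iff_subset.2 (hVmono n)
  -- ENNReal versions of the data
  set qk : V → V → ℝ≥0∞ := fun a b => ENNReal.ofReal (Q (a, b)) with hqk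
  set m1 : V → ℝ≥0∞ := fun x => ENNReal.ofReal (μ₁ x) with hm1
  set m2 : V → ℝ≥0∞ := fun x => ENNReal.ofReal (μ₂ x) with hm2
  set I : V → ℝ≥0∞ := fun x => (∑' z, qk x z) + m2 x with hI
  have houtE : ∀ x, (∑' z, qk x z) = ENNReal.ofReal (∑' z, Q (x, z)) := fun x =>
    (ENNReal.ofReal_tsum_of_nonneg (fun z => hQ.1 _) (hout x)).symm
  have hinE : ∀ x, (∑' z, qk z x) = ENNReal.ofReal (∑' z, Q (z, x)) := fun x =>
    (ENNReal.ofReal_tsum_of_nonneg (fun z => hQ.1 _) (hin x)).symm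
  have hfin : ∀ x, I x ≠ ∞ := by
    intro x
    rw [hI]
    simp only [houtE x]
    exact ENNReal.add_ne_top.2 ⟨ENNReal.ofReal_ne_top, ENNReal.ofReal_ne_top⟩
  have hIdentity : ∀ x, I x = (∑' z, qk z x) + m1 x := by
    intro x
    rw [hI]
    simp only [houtE x, hinE x, hm1, hm2]
    rw [← ENNReal.ofReal_add (tsum_nonneg fun z => hQ.1 _) (h₂.1 x),
      ← ENNReal.ofReal_add (tsum_nonneg fun z => hQ.1 _) (h₁.1 x)]
    congr 1
    have hd := hdiv x
    unfold divergence at hd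
    linarith
  have hqI1 : ∀ a b, qk a b ≤ I a := fun a b => by
    rw [hI]
    exact le_trans (ENNReal.le_tsum b) le_self_add
  have hqI2 : ∀ a b, qk a b ≤ I b := fun a b => by
    rw [hIdentity b]
    exact le_trans (ENNReal.le_tsum a) le_self_add
  have hm1I : ∀ a, m1 a ≤ I a := fun a => by rw [hIdentity a]; exact le_add_self
  have hposQ : ∀ a b, qk a b ≠ 0 ↔ 0 < Q (a, b) := by
    intro a b
    rw [hqk]
    simp [ENNReal.ofReal_eq_zero, not_le]
  have hacE : ∀ x, ¬ Relation.TransGen (fun a b => qk a b ≠ 0) x x := fun x hx =>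
    hacyc x (Relation.TransGen.mono (fun a b h => (hposQ a b).1 h) _ _ hx)
  -- flux conversion
  set OutF : ℕ → ℝ≥0∞ := fun k => ∑ x ∈ Vs k, ∑' v, if v ∈ Vs k then 0 else qk x v with hOutF
  set InF : ℕ → ℝ≥0∞ := fun k => ∑ x ∈ Vs k, ∑' v, if v ∈ Vs k then 0 else qk v x with hInF
  have hOutF_eq : ∀ k, OutF k
      = ENNReal.ofReal (∑' e : V × V, Set.indicator {p : V × V | p.1 ∈ Vs k ∧ p.2 ∉ Vs k} Q e) := by
    intro k
    rw [ENNReal.ofReal_tsum_of_nonneg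
      (fun e => Set.indicator_apply_nonneg (fun _ => hQ.1 _)) (hfluxsum k),
      ENNReal.tsum_prod']
    rw [tsum_eq_sum (s := Vs k) ?_]
    · refine Finset.sum_congr rfl fun x hx => tsum_congr fun v => ?_
      rw [Set.indicator_apply]
      by_cases hv : v ∈ Vs k
      · rw [if_pos hv, if_neg (by simp [hv]), ENNReal.ofReal_zero]
      · rw [if_neg hv, if_pos (by exact ⟨hx, hv⟩)]
    · intro x hx
      rw [ENNReal.summable.tsum_eq_zero_iff]
      intro v
      rw [Set.indicator_apply, if_neg (by simp [hx]), ENNReal.ofReal_zero]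
  have hOutF0 : Filter.Tendsto OutF Filter.atTop (nhds 0) := by
    rw [funext hOutF_eq]
    simpa using ENNReal.tendsto_ofReal hflux
  -- flux identity
  have hsplitq : ∀ (k : ℕ) (f : V → ℝ≥0∞),
      (∑' v, f v) = (∑' v, if v ∈ Vs k then f v else 0) + ∑' v, if v ∈ Vs k then 0 else f v := by
    intro k f
    rw [← ENNReal.tsum_add]
    refine tsum_congr fun v => ?_
    by_cases hv : v ∈ Vs k <;> simp [hv]
  have hIntA : ∀ k, ∑ x ∈ Vs k, (∑' v, if v ∈ Vs k then qk x v else 0)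
      = ∑ x ∈ Vs k, ∑' v, if v ∈ Vs k then qk v x else 0 := by
    intro k
    have e1 : ∀ x, (∑' v, if v ∈ Vs k then qk x v else 0) = ∑ v ∈ Vs k, qk x v := fun x =>
      tsum_eq_sum (fun v hv => if_neg hv) |>.trans (Finset.sum_congr rfl fun v hv => if_pos hv)
    have e2 : ∀ x, (∑' v, if v ∈ Vs k then qk v x else 0) = ∑ v ∈ Vs k, qk v x := fun x =>
      tsum_eq_sum (fun v hv => if_neg hv) |>.trans (Finset.sum_congr rfl fun v hv => if_pos hv)
    simp only [e1, e2]
    exact Finset.sum_comm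

  have hIntFin : ∀ k, (∑ x ∈ Vs k, ∑' v, if v ∈ Vs k then qk x v else 0) ≠ ∞ := by
    intro k
    rw [← lt_top_iff_ne_top]
    refine ENNReal.sum_lt_top.2 fun x _ => lt_of_le_of_lt ?_ (lt_top_iff_ne_top.2 (hfin x))
    calc (∑' v, if v ∈ Vs k then qk x v else 0) ≤ ∑' v, qk x v :=
          ENNReal.tsum_le_tsum fun v => by split <;> simp
      _ ≤ I x := by rw [hI]; exact le_self_add
  have hIdFlux : ∀ k, OutF k + (∑ x ∈ Vs k, m2 x) = InF k + (∑ x ∈ Vs k, m1 x) := by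
    intro k
    have hA : ∑ x ∈ Vs k, I x
        = (∑ x ∈ Vs k, ∑' v, if v ∈ Vs k then qk x v else 0)
          + (OutF k + ∑ x ∈ Vs k, m2 x) := by
      calc ∑ x ∈ Vs k, I x
          = ∑ x ∈ Vs k, (((∑' v, if v ∈ Vs k then qk x v else 0)
              + ∑' v, if v ∈ Vs k then 0 else qk x v) + m2 x) := by
            refine Finset.sum_congr rfl fun x _ => ?_
            rw [hI, ← hsplitq k (fun v => qk x v)]
        _ = _ := by
            rw [Finset.sum_add_distrib, Finset.sum_add_distrib, hOutF]
            ring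
    have hB : ∑ x ∈ Vs k, I x
        = (∑ x ∈ Vs k, ∑' v, if v ∈ Vs k then qk x v else 0)
          + (InF k + ∑ x ∈ Vs k, m1 x) := by
      calc ∑ x ∈ Vs k, I x
          = ∑ x ∈ Vs k, (((∑' v, if v ∈ Vs k then qk v x else 0)
              + ∑' v, if v ∈ Vs k then 0 else qk v x) + m1 x) := by
            refine Finset.sum_congr rfl fun x _ => ?_
            rw [hIdentity x, ← hsplitq k (fun v => qk v x)]
        _ = _ := by
            rw [Finset.sum_add_distrib, Finset.sum_add_distrib, hInF, hIntA]
            ring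
    exact ((ENNReal.add_right_inj (hIntFin k)).1 (hA.symm.trans hB))
  have hrM1 : Filter.Tendsto (fun k => ∑ x ∈ Vs k, μ₁ x) Filter.atTop (nhds 1) :=
    h₁.2.comp (Filter.tendsto_atTop_finset_of_monotone hVmono' hVcover)
  have hrM2 : Filter.Tendsto (fun k => ∑ x ∈ Vs k, μ₂ x) Filter.atTop (nhds 1) :=
    h₂.2.comp (Filter.tendsto_atTop_finset_of_monotone hVmono' hVcover)
  have hM1eq : ∀ k, (∑ x ∈ Vs k, m1 x) = ENNReal.ofReal (∑ x ∈ Vs k, μ₁ x) := fun k =>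
    (ENNReal.ofReal_sum_of_nonneg (fun x _ => h₁.1 x)).symm
  have hM2eq : ∀ k, (∑ x ∈ Vs k, m2 x) = ENNReal.ofReal (∑ x ∈ Vs k, μ₂ x) := fun k =>
    (ENNReal.ofReal_sum_of_nonneg (fun x _ => h₂.1 x)).symm
  have hInFfin : ∀ k, InF k ≠ ∞ := by
    intro k
    rw [← lt_top_iff_ne_top, hInF]
    refine ENNReal.sum_lt_top.2 fun x _ => lt_of_le_of_lt ?_ (lt_top_iff_ne_top.2 (hfin x))
    calc (∑' v, if v ∈ Vs k then 0 else qk v x) ≤ ∑' v, qk v x :=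
          ENNReal.tsum_le_tsum fun v => by split <;> simp
      _ ≤ I x := by rw [hIdentity x]; exact le_self_add
  have hOutFfin : ∀ k, OutF k ≠ ∞ := by
    intro k
    rw [← lt_top_iff_ne_top, hOutF]
    refine ENNReal.sum_lt_top.2 fun x _ => lt_of_le_of_lt ?_ (lt_top_iff_ne_top.2 (hfin x))
    calc (∑' v, if v ∈ Vs k then 0 else qk x v) ≤ ∑' v, qk x v :=
          ENNReal.tsum_le_tsum fun v => by split <;> simp
      _ ≤ I x := by rw [hI]; exact le_self_add
  have hreal : ∀ k, (InF k).toReal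
      = (OutF k).toReal + (∑ x ∈ Vs k, μ₂ x) - (∑ x ∈ Vs k, μ₁ x) := by
    intro k
    have hto := congrArg ENNReal.toReal (hIdFlux k)
    rw [ENNReal.toReal_add (hOutFfin k) (by rw [hM2eq k]; exact ENNReal.ofReal_ne_top),
      ENNReal.toReal_add (hInFfin k) (by rw [hM1eq k]; exact ENNReal.ofReal_ne_top),
      hM1eq k, hM2eq k, ENNReal.toReal_ofReal (Finset.sum_nonneg fun x _ => h₁.1 x),
      ENNReal.toReal_ofReal (Finset.sum_nonneg fun x _ => h₂.1 x)] at hto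
    linarith
  have hInF0 : Filter.Tendsto InF Filter.atTop (nhds 0) := by
    have houtr : Filter.Tendsto (fun k => (OutF k).toReal) Filter.atTop (nhds 0) := by
      have := (ENNReal.tendsto_toReal (by simp : (0:ℝ≥0∞) ≠ ∞)).comp hOutF0
      simpa [Function.comp_def] using this
    have h1 : Filter.Tendsto (fun k => (InF k).toReal) Filter.atTop (nhds 0) := by
      have h2 := (houtr.add hrM2).sub hrM1
      simp only [zero_add, sub_self] at h2
      exact h2.congr fun k => (hreal k).symm
    have heq : InF = fun k => ENNReal.ofReal ((InF k).toReal) :=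
      funext fun k => (ENNReal.ofReal_toReal (hInFfin k)).symm
    rw [heq]
    simpa using ENNReal.tendsto_ofReal h1
  -- apply the core lemma, forwards and backwards
  set p2 : V → V → ℝ≥0∞ := fun a b => qk a b / I a with hp2
  set dd2 : V → ℝ≥0∞ := fun x => m2 x / I x with hdd2
  have hHF1 : ∀ y, I y ≠ 0 → HF p2 dd2 y = 1 := by
    intro y hy
    rw [HF_eq]
    exact core_lemma qk m2 I hfin (fun x => by rw [hI])
      (fun x => by rw [hIdentity x]; exact le_self_add) hacE Vs hVmono' hOutF0 y (hVcover y) hy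
  have hHF2 : ∀ x, I x ≠ 0 → HF (fun a b => qk b a / I a) (fun u => m1 u / I u) x = 1 := by
    intro x hx
    rw [HF_eq]
    refine core_lemma (fun a b => qk b a) m1 I hfin (fun z => by rw [hIdentity z])
      (fun z => by rw [hI]; exact le_self_add) ?_ Vs hVmono' hInF0 x (hVcover x) hx
    intro z hz
    exact hacE z (Relation.transGen_swap.1 hz)
  have hRB : ∀ x, I x ≠ 0 → RB p2 m1 x = I x := by
    intro x hx
    rw [hp2, RB_eq qk I m1 hfin hqI1 hqI2 hm1I x, hHF2 x hx, mul_one]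
  have hacp2 : ∀ v, ¬ Relation.TransGen (fun a b => p2 a b ≠ 0) v v := by
    intro v hv
    refine hacE v (Relation.TransGen.mono (fun c d h => ?_) _ _ hv)
    intro h0
    exact h (by rw [hp2]; simp only; rw [h0, ENNReal.zero_div])
  set WL : List V → ℝ≥0∞ := fun l => headw m1 l * wgt p2 l * endw dd2 l with hWL
  -- the edge identity
  have hedge : ∀ a b : V,
      (∑' l : List V, ind ((a, b) ∈ pathEdges l) (WL l)) = qk a b := by
    intro a b
    by_cases hq : qk a b = 0
    · rw [hq, ENNReal.summable.tsum_eq_zero_iff]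
      intro l
      by_cases hmem : (a, b) ∈ pathEdges l
      · rw [ind_pos hmem, hWL]
        simp only
        rw [wgt_eq_zero_of_mem hmem (by rw [hp2]; simp only; rw [hq, ENNReal.zero_div]),
          mul_zero, zero_mul]
      · exact ind_neg hmem _
    · have hIa : I a ≠ 0 := fun h => hq (le_antisymm (h ▸ hqI1 a b) (zero_le))
      have hIb : I b ≠ 0 := fun h => hq (le_antisymm (h ▸ hqI2 a b) (zero_le))
      have hp2ab : p2 a b ≠ 0 := by
        rw [hp2]
        simp only [ne_eq, ENNReal.div_eq_zero_iff, not_or]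
        exact ⟨hq, hfin a⟩
      rw [hWL]
      rw [split_edge p2 m1 dd2 hacp2 a b hp2ab, hRB a hIa, hHF1 b hIb, mul_one]
      rw [hp2]
      exact ennreal_mul_div_cancel_of_le (hqI1 a b) (hfin a)
  -- total mass bound
  have htot : (∑' l : List V, WL l) ≤ 1 := by
    rw [hWL]
    simp only
    rw [total_mass]
    calc ∑' z, m1 z * HF p2 dd2 z ≤ ∑' z, m1 z := by
          refine ENNReal.tsum_le_tsum fun z => ?_
          by_cases hz : I z = 0
          · have hm0 : m1 z = 0 := le_antisymm (hz ▸ hm1I z) (zero_le)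
            rw [hm0, zero_mul]
          · rw [hHF1 z hz, mul_one]
      _ = 1 := by
          rw [hm1, ← ENNReal.ofReal_tsum_of_nonneg h₁.1 h₁.2.summable, h₁.2.tsum_eq,
            ENNReal.ofReal_one]
  -- package the decomposition
  set P : Set (List V) := Function.support WL with hP
  obtain ⟨emb, hemb⟩ := exists_injective_nat ↥P
  set γ : ℕ → List V := fun n => if h : ∃ lp : ↥P, emb lp = n then (h.choose : List V) else [v₀]
    with hγ
  set WnE : ℕ → ℝ≥0∞ := fun n =>
    if h : ∃ lp : ↥P, emb lp = n then WL (h.choose : List V) else 0 with hWnE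
  have hchoose : ∀ (lp : ↥P) (h : ∃ lp' : ↥P, emb lp' = emb lp), h.choose = lp :=
    fun lp h => hemb h.choose_spec
  have hreidx : ∀ (F : List V → ℝ≥0∞), (∀ l, F l ≠ 0 → WL l ≠ 0) →
      (∑' n : ℕ, if h : ∃ lp : ↥P, emb lp = n then F (h.choose : List V) else 0)
        = ∑' l : List V, F l := by
    intro F hF
    have hsupp : Function.support
        (fun n => if h : ∃ lp : ↥P, emb lp = n then F (h.choose : List V) else 0)
          ⊆ Set.range emb := by
      intro n hn
      by_contra hnr
      apply hn
      show (if h : ∃ lp : ↥P, emb lp = n then F (h.choose : List V) else 0) = 0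
      exact dif_neg fun hex => hnr ⟨hex.choose, hex.choose_spec⟩
    calc (∑' n : ℕ, if h : ∃ lp : ↥P, emb lp = n then F (h.choose : List V) else 0)
        = ∑' lp : ↥P, (if h : ∃ lp' : ↥P, emb lp' = emb lp then F (h.choose : List V) else 0) :=
          (Function.Injective.tsum_eq hemb hsupp).symm
      _ = ∑' lp : ↥P, F ↑lp := by
          refine tsum_congr fun lp => ?_
          rw [dif_pos ⟨lp, rfl⟩]
          exact congrArg (fun z : ↥P => F ↑z) (hchoose lp ⟨lp, rfl⟩)
      _ = ∑' l : List V, F l := by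
          rw [tsum_subtype]
          refine tsum_congr fun l => ?_
          by_cases hl : l ∈ P
          · rw [Set.indicator_of_mem hl]
          · rw [Set.indicator_of_notMem hl]
            have hF0 : F l = 0 := by
              by_contra hne
              exact hl (hF l hne)
            rw [hF0]
  have hsum_eq : ∑' n, WnE n = ∑' l, WL l := hreidx WL fun l h => h
  have hWnE_le : ∑' n, WnE n ≤ 1 := by rw [hsum_eq]; exact htot
  have hWnE_fin : ∀ n, WnE n ≠ ∞ := fun n =>
    (lt_of_le_of_lt (le_trans (ENNReal.le_tsum n) hWnE_le) ENNReal.one_lt_top).ne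
  have hγgood : ∀ n, IsDipath E (γ n) ∧ (γ n).Nodup := by
    intro n
    rw [hγ]
    simp only
    split
    · next h =>
      have hWl : WL (h.choose : List V) ≠ 0 := (h.choose).2
      set l : List V := (h.choose : List V) with hldef
      have hhw : headw m1 l ≠ 0 := fun h0 => hWl (by rw [hWL]; simp only; rw [h0, zero_mul, zero_mul])
      have hwg : wgt p2 l ≠ 0 := fun h0 => hWl (by rw [hWL]; simp only; rw [h0, mul_zero, zero_mul])
      have hne : l ≠ [] := by
        intro h0
        apply hhw
        rw [h0]
        rfl
      have hchain := wgt_ne_zero_chain hwg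
      have hchainE : l.Chain' (fun a b => (a, b) ∈ E) := by
        refine hchain.imp fun a b hab => ?_
        by_contra hE
        have hq0 : Q (a, b) = 0 := hQ.2 _ hE
        exact hab (by rw [hp2]; simp only; rw [hqk]; simp only; rw [hq0, ENNReal.ofReal_zero, ENNReal.zero_div])
      exact ⟨⟨hne, hchainE⟩, chain'_nodup hacp2 hchain⟩
    · refine ⟨⟨by simp, List.IsChain.singleton v₀⟩, List.nodup_singleton v₀⟩
  refine ⟨γ, fun n => (WnE n).toReal, fun n => (hγgood n).1, fun n => (hγgood n).2,
    fun n => ENNReal.toReal_nonneg, ?_, ?_⟩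
  · exact ENNReal.summable_toReal (lt_of_le_of_lt hWnE_le ENNReal.one_lt_top).ne
  · rintro ⟨a, b⟩
    have hEn : ∀ n, ind ((a, b) ∈ pathEdges (γ n)) (WnE n)
        = (if h : ∃ lp : ↥P, emb lp = n then
            ind ((a, b) ∈ pathEdges ((h.choose : List V))) (WL (h.choose : List V)) else 0) := by
      intro n
      by_cases h : ∃ lp : ↥P, emb lp = n
      · rw [dif_pos h, hγ, hWnE]
        simp only
        rw [dif_pos h, dif_pos h]
      · rw [dif_neg h, hWnE]
        simp only
        rw [dif_neg h]
        by_cases hmem : (a, b) ∈ pathEdges (γ n)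
        · rw [ind_pos hmem]
        · rw [ind_neg hmem]
    have hENsum : (∑' n, ind ((a, b) ∈ pathEdges (γ n)) (WnE n)) = qk a b := by
      rw [tsum_congr hEn,
        hreidx (fun l => ind ((a, b) ∈ pathEdges l) (WL l)) (fun l h => (ind_ne_zero h).2)]
      exact hedge a b
    have hQe : Q (a, b) = (qk a b).toReal := by
      rw [hqk]
      exact (ENNReal.toReal_ofReal (hQ.1 _)).symm
    rw [hQe, ← hENsum, ENNReal.tsum_toReal_eq (fun n => ?_)]
    · refine tsum_congr fun n => ?_
      by_cases hmem : (a, b) ∈ pathEdges (γ n)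
      · rw [ind_pos hmem]
        unfold pathFlow
        rw [Set.indicator_of_mem (by exact hmem), Pi.one_apply, mul_one]
      · rw [ind_neg hmem]
        unfold pathFlow
        rw [Set.indicator_of_notMem (by exact hmem), mul_zero, ENNReal.toReal_zero]
    · by_cases hmem : (a, b) ∈ pathEdges (γ n)
      · rw [ind_pos hmem]; exact hWnE_fin n
      · rw [ind_neg hmem]; exact ENNReal.zero_ne_top
end

section
/- Let Q be a flow on an infinite digraph (V,E) with countable vertex set. If there exists an invading sequence of vertices {V_n} such that sup{ Q(x,y) : (x,y) ∈ E, {x,y} ∩ (V \ V_n) ≠ ∅ } does not converge to 0 as n → ∞, then Q is not finitely decomposable. -/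
open scoped BigOperators

variable {V : Type*}

/-- **A necessary condition for finite decomposability.**
If along some invading sequence `Vₙ` the supremum of `Q` over edges touching the complement
of `Vₙ` does not tend to `0`, then the flow `Q` is not finitely decomposable. -/
theorem not_finitely_decomposable {V : Type*} [Countable V] [Infinite V]
    (E : Set (V × V)) (hloop : ∀ x : V, (x, x) ∉ E)
    (Q : V × V → ℝ) (hQ : IsFlow E Q)
    (Vs : ℕ → Finset V) (hVmono : ∀ n, Vs n ⊆ Vs (n + 1)) (hVcover : ∀ x : V, ∃ n, x ∈ Vs n)
    (hsup : ¬ Filter.Tendsto (fun n =>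
        ⨆ (e : V × V) (_ : e ∈ E ∧ (e.1 ∉ Vs n ∨ e.2 ∉ Vs n)), ENNReal.ofReal (Q e))
      Filter.atTop (nhds 0)) :
    ¬ FinDecomposable E Q := by
  rintro ⟨γ, q, hγ, hnodup, hq0, hqsum, hQeq⟩
  apply hsup
  rw [ENNReal.tendsto_atTop_zero]
  intro ε hε
  obtain ⟨δ, hδ0, hδε⟩ : ∃ δ : ℝ, 0 < δ ∧ ENNReal.ofReal δ ≤ ε := by
    refine ⟨(min 1 ε).toReal, ENNReal.toReal_pos (by simp [hε.ne', lt_min_iff, ← pos_iff_ne_zero, hε]) ?_, ?_⟩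
    · exact ne_top_of_le_ne_top ENNReal.one_ne_top (min_le_left _ _)
    · rw [ENNReal.ofReal_toReal (ne_top_of_le_ne_top ENNReal.one_ne_top (min_le_left _ _))]
      exact min_le_right _ _
  -- choose N with tail sum < δ
  obtain ⟨N, hN⟩ := ((tendsto_sum_nat_add q).eventually_lt_const hδ0).exists
  -- finite set of vertices of the first N paths
  classical
  set S : Finset V := (Finset.range N).biUnion (fun k => (γ k).toFinset) with hS
  -- Vs is monotone
  have hmono : Monotone Vs := monotone_nat_of_le_succ (fun n => hVmono n)
  obtain ⟨n₀, hn₀⟩ : ∃ n₀, ∀ x ∈ S, x ∈ Vs n₀ := by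
    refine ⟨S.sup (fun x => Nat.find (hVcover x)), fun x hx => ?_⟩
    exact hmono (Finset.le_sup hx) (Nat.find_spec (hVcover x))
  refine ⟨n₀, fun n hn => ?_⟩
  refine iSup₂_le fun e he => ?_
  refine le_trans (ENNReal.ofReal_le_ofReal ?_) hδε
  -- key bound : Q e ≤ tail sum
  have hpf : ∀ l : List V, 0 ≤ pathFlow l e ∧ pathFlow l e ≤ 1 := by
    intro l
    unfold pathFlow
    by_cases h : e ∈ pathEdges l <;> simp [Set.indicator_apply, h]
  have hvanish : ∀ k < N, pathFlow (γ k) e = 0 := by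
    intro k hk
    unfold pathFlow
    rw [Set.indicator_apply_eq_zero]
    intro hmem
    exfalso
    have h1 : e.1 ∈ γ k ∧ e.2 ∈ γ k := by
      have := List.of_mem_zip (show (e.1, e.2) ∈ (γ k).zip (γ k).tail from hmem)
      exact ⟨this.1, List.mem_of_mem_tail this.2⟩
    have hS1 : e.1 ∈ S := Finset.mem_biUnion.2 ⟨k, Finset.mem_range.2 hk, List.mem_toFinset.2 h1.1⟩
    have hS2 : e.2 ∈ S := Finset.mem_biUnion.2 ⟨k, Finset.mem_range.2 hk, List.mem_toFinset.2 h1.2⟩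
    rcases he.2 with h | h
    · exact h (hmono hn (hn₀ _ hS1))
    · exact h (hmono hn (hn₀ _ hS2))
  have hsumf : Summable (fun k => q k * pathFlow (γ k) e) := by
    refine Summable.of_nonneg_of_le (fun k => mul_nonneg (hq0 k) (hpf _).1) (fun k => ?_) hqsum
    calc q k * pathFlow (γ k) e ≤ q k * 1 := mul_le_mul_of_nonneg_left (hpf _).2 (hq0 k)
      _ = q k := mul_one _
  have hqtail : Summable (fun k => q (k + N)) := by
    rwa [summable_nat_add_iff]
  calc Q e = ∑' k, q k * pathFlow (γ k) e := hQeq e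
    _ = ∑ k ∈ Finset.range N, q k * pathFlow (γ k) e
        + ∑' k, q (k + N) * pathFlow (γ (k + N)) e := (Summable.sum_add_tsum_nat_add N hsumf).symm
    _ = ∑' k, q (k + N) * pathFlow (γ (k + N)) e := by
        rw [Finset.sum_eq_zero (fun k hk => by
          rw [hvanish k (Finset.mem_range.1 hk), mul_zero]), zero_add]
    _ ≤ ∑' k, q (k + N) := by
        refine Summable.tsum_le_tsum (fun k => ?_) ((summable_nat_add_iff N).2 hsumf) hqtail
        calc q (k + N) * pathFlow (γ (k + N)) e ≤ q (k + N) * 1 :=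
              mul_le_mul_of_nonneg_left (hpf _).2 (hq0 _)
          _ = q (k + N) := mul_one _
    _ ≤ δ := hN.le
end

section
/- Let V be a finite set and ρ a coupling between probability measures μ₁ and μ₂ on V. Suppose there exist, for each pair x ≠ y, finitely many directed paths γⁱ_{(x,y)} from x to y (with vertices in V, otherwise unconstrained) and nonnegative weights ρⁱ(x,y) with ∑_i ρⁱ(x,y) = ρ(x,y), such that the flow Q = ∑_{x≠y} ∑_i ρⁱ(x,y) Q_{γⁱ_{(x,y)}} is acyclic. Then the elementary flow ∑_{x≠y} ρ(x,y) Q_{(x,y)} (on the complete digraph on V) is itself acyclic. -/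
open scoped BigOperators

variable {V : Type*}

private lemma path_rtg {V : Type*} {S : V → V → Prop} :
    ∀ (l : List V) (a b : V), l.head? = some a → l.getLast? = some b →
      (∀ x y, (x, y) ∈ pathEdges l → S x y) → Relation.ReflTransGen S a b
  | [], a, b, ha, _, _ => by simp at ha
  | [x], a, b, ha, hb, _ => by
      simp at ha hb
      subst ha; subst hb
      exact Relation.ReflTransGen.refl
  | x :: y :: t, a, b, ha, hb, hS => by
      simp only [List.head?_cons, Option.some.injEq] at ha
      subst ha
      have hb' : (y :: t).getLast? = some b := by
        simpa using hb
      have step : S x y := hS x y (by simp [pathEdges])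
      exact Relation.ReflTransGen.head step
        (path_rtg (y :: t) y b rfl hb' (fun u v h => hS u v (by simp [pathEdges] at h ⊢; tauto)))

/-- **Economic couplings are detected by the elementary flow.**
If some choice of paths and weights representing the coupling `ρ` yields an acyclic flow,
then the elementary flow `∑_{x ≠ y} ρ(x,y) Q_{(x,y)}` is itself acyclic. -/
theorem economic_coupling_elementary_acyclic {V : Type*} [Fintype V] [DecidableEq V]
    (μ₁ μ₂ : V → ℝ) (h₁ : IsProbF μ₁) (h₂ : IsProbF μ₂)
    (ρ : V × V → ℝ) (hρ : IsCouplingF μ₁ μ₂ ρ)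
    (k : V × V → ℕ) (γ : V × V → ℕ → List V) (r : V × V → ℕ → ℝ)
    (hpaths : ∀ p : V × V, p.1 ≠ p.2 → ∀ i < k p,
      IsDipath {e : V × V | e.1 ≠ e.2} (γ p i) ∧
      (γ p i).head? = some p.1 ∧ (γ p i).getLast? = some p.2 ∧ 0 ≤ r p i)
    (hweights : ∀ p : V × V, p.1 ≠ p.2 → ∑ i ∈ Finset.range (k p), r p i = ρ p)
    (hacyc : AcyclicRel fun a b => 0 <
      ∑ p : V × V, if p.1 = p.2 then 0 else
        ∑ i ∈ Finset.range (k p), r p i * pathFlow (γ p i) (a, b)) :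
    AcyclicRel fun a b => a ≠ b ∧ 0 < ρ (a, b) := by
  classical
  set Q : V × V → ℝ := fun e =>
    ∑ p : V × V, if p.1 = p.2 then 0 else
      ∑ i ∈ Finset.range (k p), r p i * pathFlow (γ p i) e with hQ
  have hflow_nonneg : ∀ (p : V × V) (i : ℕ) (e : V × V), 0 ≤ pathFlow (γ p i) e := by
    intro p i e
    exact Set.indicator_nonneg (fun _ _ => zero_le_one) _
  have hterm_nonneg : ∀ (e : V × V) (p : V × V),
      0 ≤ (if p.1 = p.2 then 0 else ∑ i ∈ Finset.range (k p), r p i * pathFlow (γ p i) e) := by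
    intro e p
    split
    · exact le_rfl
    · rename_i hne
      exact Finset.sum_nonneg fun i hi =>
        mul_nonneg ((hpaths p hne i (Finset.mem_range.mp hi)).2.2.2) (hflow_nonneg p i e)
  -- key step: each elementary edge embeds into a Q-positive path
  have key : ∀ a b : V, a ≠ b → 0 < ρ (a, b) →
      Relation.TransGen (fun x y => 0 < Q (x, y)) a b := by
    intro a b hab hpos
    -- find a path with positive weight
    have hsum := hweights (a, b) hab
    have : ∃ i ∈ Finset.range (k (a, b)), 0 < r (a, b) i := by
      by_contra h
      push_neg at h
      have : ∑ i ∈ Finset.range (k (a, b)), r (a, b) i ≤ 0 := by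
        apply Finset.sum_nonpos
        intro i hi
        exact h i hi
      linarith [hsum ▸ this]
    obtain ⟨i, hik, hri⟩ := this
    have hik' := Finset.mem_range.mp hik
    obtain ⟨hdp, hhead, hlast, _⟩ := hpaths (a, b) hab i hik'
    -- each edge of γ (a,b) i has positive Q
    have hedge : ∀ x y, (x, y) ∈ pathEdges (γ (a, b) i) → 0 < Q (x, y) := by
      intro x y hxy
      have h1 : 0 < r (a, b) i * pathFlow (γ (a, b) i) (x, y) := by
        have : pathFlow (γ (a, b) i) (x, y) = 1 := by
          simp [pathFlow, Set.indicator_of_mem, hxy]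
        rw [this, mul_one]; exact hri
      have hinner : 0 < ∑ j ∈ Finset.range (k (a, b)),
          r (a, b) j * pathFlow (γ (a, b) j) (x, y) := by
        apply Finset.sum_pos'
        · intro j hj
          exact mul_nonneg ((hpaths (a, b) hab j (Finset.mem_range.mp hj)).2.2.2)
            (hflow_nonneg _ _ _)
        · exact ⟨i, hik, h1⟩
      have h2 := Finset.single_le_sum
        (f := fun p : V × V => if p.1 = p.2 then 0 else
          ∑ j ∈ Finset.range (k p), r p j * pathFlow (γ p j) (x, y))
        (fun p _ => hterm_nonneg (x, y) p) (Finset.mem_univ (a, b))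
      simp only [if_neg (show ¬((a, b) : V × V).1 = ((a, b) : V × V).2 from hab)] at h2
      exact lt_of_lt_of_le hinner h2
    have hrt : Relation.ReflTransGen (fun x y => 0 < Q (x, y)) a b :=
      path_rtg (γ (a, b) i) a b hhead hlast hedge
    rcases hrt.cases_head with heq | ⟨c, hc, hcb⟩
    · exact absurd heq hab
    · exact Relation.TransGen.head' hc hcb
  intro a ha
  have : Relation.TransGen (fun x y => 0 < Q (x, y)) a a := by
    have := Relation.TransGen.mono (fun x y h => key x y h.1 h.2) _ _ ha
    exact Relation.transGen_idem ▸ this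
  exact hacyc a this
end

section
/- Let V be a finite set and ρ a coupling between probability measures μ₁ and μ₂ on V such that the elementary flow ∑_{x≠y} ρ(x,y) Q_{(x,y)} is not acyclic. Then there exists another coupling ρ̃ between μ₁ and μ₂ such that ρ̃(x,y) ≤ ρ(x,y) for all x ≠ y, with strict inequality for at least one pair (x,y). -/
open scoped BigOperators

variable {V : Type*}

open Classical in
/-- Real-valued count of an element in a list. -/
noncomputable def cntR (L : List (V × V)) (p : V × V) : ℝ :=
  (L.map fun e => if e = p then (1:ℝ) else 0).sum

open Classical in
/-- Real-valued count of edges with a given head. -/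
noncomputable def hedR (L : List (V × V)) (a : V) : ℝ :=
  (L.map fun e => if e.1 = a then (1:ℝ) else 0).sum

open Classical in
/-- Real-valued count of edges with a given tail. -/
noncomputable def tlR (L : List (V × V)) (a : V) : ℝ :=
  (L.map fun e => if e.2 = a then (1:ℝ) else 0).sum

open Classical

lemma cntR_nonneg (L : List (V × V)) (p : V × V) : 0 ≤ cntR L p := by
  apply List.sum_nonneg; intro x hx
  simp only [List.mem_map] at hx
  obtain ⟨e, _, rfl⟩ := hx
  split <;> norm_num

lemma cntR_eq_zero (L : List (V × V)) (p : V × V) (h : p ∉ L) : cntR L p = 0 := by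
  apply List.sum_eq_zero; intro x hx
  simp only [List.mem_map] at hx
  obtain ⟨e, he, rfl⟩ := hx
  rw [if_neg]; rintro rfl; exact h he

lemma one_le_cntR (L : List (V × V)) (p : V × V) (h : p ∈ L) : 1 ≤ cntR L p := by
  have : (if p = p then (1:ℝ) else 0) ≤ cntR L p := by
    apply List.single_le_sum
    · intro x hx
      simp only [List.mem_map] at hx
      obtain ⟨e, _, rfl⟩ := hx
      split <;> norm_num
    · exact List.mem_map.2 ⟨p, h, rfl⟩
  simpa using this

lemma cntR_le_length (L : List (V × V)) (p : V × V) : cntR L p ≤ L.length := by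
  have := List.sum_le_card_nsmul (L.map fun e => if e = p then (1:ℝ) else 0) 1 ?_
  · simpa [cntR] using this
  · intro x hx
    simp only [List.mem_map] at hx
    obtain ⟨e, _, rfl⟩ := hx
    split <;> norm_num

lemma sum_cntR_fst [Fintype V] (L : List (V × V)) (a : V) :
    ∑ y, cntR L (a, y) = hedR L a := by
  induction L with
  | nil => simp [cntR, hedR]
  | cons e L ih =>
    simp only [cntR, hedR, List.map_cons, List.sum_cons] at *
    rw [Finset.sum_add_distrib, ih]
    congr 1
    obtain ⟨u, v⟩ := e
    have : ∀ y, (if (u,v) = (a,y) then (1:ℝ) else 0)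
        = if u = a then (if y = v then (1:ℝ) else 0) else 0 := by
      intro y
      by_cases h1 : u = a <;> by_cases h2 : v = y <;>
        simp [Prod.ext_iff, h1, h2, eq_comm] <;> simp [Ne.symm h1]
    rw [Finset.sum_congr rfl fun y _ => this y]
    by_cases h1 : u = a <;> simp [h1]

lemma sum_cntR_snd [Fintype V] (L : List (V × V)) (b : V) :
    ∑ x, cntR L (x, b) = tlR L b := by
  induction L with
  | nil => simp [cntR, tlR]
  | cons e L ih =>
    simp only [cntR, tlR, List.map_cons, List.sum_cons] at *
    rw [Finset.sum_add_distrib, ih]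
    congr 1
    obtain ⟨u, v⟩ := e
    have : ∀ x, (if (u,v) = (x,b) then (1:ℝ) else 0)
        = if v = b then (if x = u then (1:ℝ) else 0) else 0 := by
      intro x
      by_cases h1 : v = b <;> by_cases h2 : u = x <;>
        simp [Prod.ext_iff, h1, h2, eq_comm] <;> simp [Ne.symm h1]
    rw [Finset.sum_congr rfl fun x _ => this x]
    by_cases h1 : v = b <;> simp [h1]

lemma map_fst_zip_cons : ∀ (l : List V) (x : V), l ≠ [] →
    (((x :: l).zip l).map Prod.fst) = x :: l.dropLast := by
  intro l
  induction l with
  | nil => intro x h; exact absurd rfl h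
  | cons y l ih =>
    intro x _
    cases l with
    | nil => simp
    | cons z l =>
      have := ih y (by simp)
      simp only [List.zip_cons_cons, List.map_cons] at this ⊢
      rw [List.dropLast_cons₂]
      simpa using this

lemma hedR_eq_tlR (l : List V) (x : V) (hl : l ≠ []) (hlast : l.getLast hl = x) :
    ∀ b, hedR ((x :: l).zip l) b = tlR ((x :: l).zip l) b := by
  intro b
  have hfst : (((x :: l).zip l).map Prod.fst) = x :: l.dropLast := map_fst_zip_cons l x hl
  have hsnd : (((x :: l).zip l).map Prod.snd) = l :=
    List.map_snd_zip (by simp)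
  have hperm : (((x :: l).zip l).map Prod.fst).Perm (((x :: l).zip l).map Prod.snd) := by
    rw [hfst, hsnd]
    have h1 : l.dropLast ++ [x] = l := by rw [← hlast]; exact List.dropLast_append_getLast hl
    calc (x :: l.dropLast).Perm (l.dropLast ++ [x]) := (List.perm_append_singleton x _).symm
      _ = l := h1
  have key : ∀ (f : V → ℝ) (M N : List V), M.Perm N →
      (M.map f).sum = (N.map f).sum := fun f M N h => (h.map f).sum_eq
  have e1 : hedR ((x :: l).zip l) b
      = ((((x :: l).zip l).map Prod.fst).map fun a => if a = b then (1:ℝ) else 0).sum := by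
    rw [List.map_map]; rfl
  have e2 : tlR ((x :: l).zip l) b
      = ((((x :: l).zip l).map Prod.snd).map fun a => if a = b then (1:ℝ) else 0).sum := by
    rw [List.map_map]; rfl
  rw [e1, e2]
  exact key _ _ _ hperm

lemma chain_zip_rel {r : V → V → Prop} :
    ∀ (l : List V) (x : V), List.Chain r x l → ∀ e ∈ (x :: l).zip l, r e.1 e.2 := by
  intro l
  induction l with
  | nil => intro x _ e he; simp at he
  | cons y l ih =>
    intro x hc e he
    replace hc : r x y ∧ List.Chain r y l := List.isChain_cons_cons.1 hc
    simp only [List.zip_cons_cons, List.mem_cons] at he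
    rcases he with rfl | he
    · exact hc.1
    · exact ih y hc.2 e he

lemma exists_chain_list {r : V → V → Prop} {a b : V} (h : Relation.TransGen r a b) :
    ∃ l : List V, ∃ hl : l ≠ [], List.Chain r a l ∧ l.getLast hl = b := by
  induction h using Relation.TransGen.head_induction_on with
  | single h => exact ⟨[b], by simp, by simp [List.Chain, h], rfl⟩
  | head h' _ ih =>
    obtain ⟨l, hl, hc, hlast⟩ := ih
    refine ⟨_ :: l, by simp, List.chain_cons.2 ⟨h', hc⟩, ?_⟩
    rwa [List.getLast_cons hl]
/-- **Non-economic couplings can be improved.**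
If the elementary flow of the coupling `ρ` is not acyclic, there is another coupling `ρ̃`
of the same marginals with `ρ̃ ≤ ρ` off the diagonal and a strict inequality somewhere. -/
theorem non_acyclic_coupling_improvable {V : Type*} [Fintype V]
    (μ₁ μ₂ : V → ℝ) (h₁ : IsProbF μ₁) (h₂ : IsProbF μ₂)
    (ρ : V × V → ℝ) (hρ : IsCouplingF μ₁ μ₂ ρ)
    (hnotacyc : ¬ AcyclicRel fun a b => a ≠ b ∧ 0 < ρ (a, b)) :
    ∃ ρ' : V × V → ℝ, IsCouplingF μ₁ μ₂ ρ' ∧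
      (∀ p : V × V, p.1 ≠ p.2 → ρ' p ≤ ρ p) ∧
      ∃ p : V × V, p.1 ≠ p.2 ∧ ρ' p < ρ p := by
  classical
  set r : V → V → Prop := fun a b => a ≠ b ∧ 0 < ρ (a, b) with hr
  simp only [AcyclicRel, not_forall, not_not] at hnotacyc
  obtain ⟨x, hx⟩ := hnotacyc
  obtain ⟨l, hl, hchain, hlast⟩ := exists_chain_list hx
  set L : List (V × V) := (x :: l).zip l with hL
  have hedge : ∀ e ∈ L, e.1 ≠ e.2 ∧ 0 < ρ e := chain_zip_rel l x hchain
  have hL0 : L ≠ [] := by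
    cases l with
    | nil => exact absurd rfl hl
    | cons y l => simp [hL]
  obtain ⟨e₀, he₀⟩ := List.exists_mem_of_ne_nil L hL0
  have hSne : L.toFinset.Nonempty := ⟨e₀, List.mem_toFinset.2 he₀⟩
  set m : ℝ := L.toFinset.inf' hSne ρ with hm
  have hm0 : 0 < m := by
    rw [hm, Finset.lt_inf'_iff]
    intro e he
    exact (hedge e (List.mem_toFinset.1 he)).2
  have hmle : ∀ e ∈ L, m ≤ ρ e := fun e he =>
    Finset.inf'_le ρ (List.mem_toFinset.2 he)
  have hn0 : (0:ℝ) < L.length := by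
    have : 0 < L.length := List.length_pos_iff.2 hL0
    exact_mod_cast this
  set ε : ℝ := m / L.length with hε
  have hε0 : 0 < ε := div_pos hm0 hn0
  set ρ' : V × V → ℝ := fun p =>
    ρ p - ε * cntR L p + (if p.1 = p.2 then ε * hedR L p.1 else 0) with hρ'
  have hεcnt : ∀ p, ε * cntR L p ≤ m := by
    intro p
    calc ε * cntR L p ≤ ε * L.length :=
          mul_le_mul_of_nonneg_left (cntR_le_length L p) hε0.le
      _ = m := by rw [hε, div_mul_cancel₀ _ hn0.ne']
  have hedR_nonneg : ∀ a, 0 ≤ hedR L a := by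
    intro a
    apply List.sum_nonneg
    intro y hy
    simp only [List.mem_map] at hy
    obtain ⟨e, _, rfl⟩ := hy
    split <;> norm_num
  refine ⟨ρ', ⟨?_, ?_, ?_⟩, ?_, ?_⟩
  · -- nonnegativity
    intro p
    by_cases hd : p.1 = p.2
    · have hpL : p ∉ L := fun h => (hedge p h).1 hd
      rw [hρ']
      simp only [hd, if_pos]
      rw [cntR_eq_zero L p hpL]
      have := hρ.1 p
      nlinarith [hedR_nonneg p.1, hedR_nonneg p.2]
    · rw [hρ']
      simp only [hd, if_neg, if_false]
      by_cases hpL : p ∈ L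
      · have := hmle p hpL
        have := hεcnt p
        linarith
      · rw [cntR_eq_zero L p hpL]
        have := hρ.1 p
        linarith
  · -- first marginal
    intro a
    have : ∑ y, ρ' (a, y) =
        (∑ y, ρ (a, y)) - ε * (∑ y, cntR L (a, y))
          + ∑ y, (if a = y then ε * hedR L a else 0) := by
      rw [hρ']
      rw [Finset.sum_add_distrib, Finset.sum_sub_distrib, Finset.mul_sum]
    rw [this, sum_cntR_fst, hρ.2.1 a, Finset.sum_ite_eq Finset.univ a
      (fun _ => ε * hedR L a)]
    simp
  · -- second marginal
    intro b
    have : ∑ x', ρ' (x', b) =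
        (∑ x', ρ (x', b)) - ε * (∑ x', cntR L (x', b))
          + ∑ x', (if x' = b then ε * hedR L x' else 0) := by
      rw [hρ']
      rw [Finset.sum_add_distrib, Finset.sum_sub_distrib, Finset.mul_sum]
    rw [this, sum_cntR_snd, hρ.2.2 b]
    have : ∑ x', (if x' = b then ε * hedR L x' else 0) = ε * hedR L b := by
      rw [Finset.sum_ite_eq' Finset.univ b (fun x' => ε * hedR L x')]
      simp
    rw [this, hedR_eq_tlR l x hl hlast b]
    ring
  · -- off-diagonal decrease
    intro p hp
    rw [hρ']
    simp only [if_neg hp]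
    have h1 := cntR_nonneg L p
    nlinarith
  · -- strict somewhere
    refine ⟨e₀, (hedge e₀ he₀).1, ?_⟩
    rw [hρ']
    simp only [if_neg (hedge e₀ he₀).1]
    have h1 := one_le_cntR L e₀ he₀
    nlinarith
end

section
/- Let V be a finite set, (V,E) a digraph, and Q an acyclic flow on (V,E) with div Q = μ₁ − μ₂ for probability measures μ₁, μ₂ on V. Then there exists a coupling ρ between μ₁ and μ₂ that is compatible with the partial order induced by the acyclic digraph (V,E(Q)); in particular ρ(x,y) > 0 implies x = y or there is a directed path from x to y in (V,E(Q)). -/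
open scoped BigOperators

variable {V : Type*}

section Helpers

private lemma pathEdges_cons_cons (a b : V) (r : List V) :
    pathEdges (a :: b :: r) = (a, b) :: pathEdges (b :: r) := rfl

private lemma mem_of_mem_pathEdges {l : List V} {x y : V} (h : (x, y) ∈ pathEdges l) :
    x ∈ l ∧ y ∈ l.tail :=
  List.of_mem_zip h

private lemma chain'_of_pathEdges {R : V → V → Prop} :
    ∀ {l : List V}, l.Chain' R → ∀ {x y : V}, (x, y) ∈ pathEdges l → R x y := by
  intro l
  induction l with
  | nil => intro _ x y h; simp [pathEdges] at h
  | cons a l ih =>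
    cases l with
    | nil => intro _ x y h; simp [pathEdges] at h
    | cons b t =>
      intro hc x y h
      rw [pathEdges_cons_cons, List.mem_cons] at h
      rcases h with h | h
      · obtain ⟨rfl, rfl⟩ := Prod.mk.injEq .. ▸ h
        exact (List.isChain_cons_cons.mp hc).1
      · exact ih (List.isChain_cons_cons.mp hc).2 h

private lemma chain'_nodup_s7 {r : V → V → Prop} (hr : AcyclicRel r) {l : List V}
    (hl : l.Chain' r) : l.Nodup := by
  haveI : IsTrans V (Relation.TransGen r) := ⟨fun _ _ _ => Relation.TransGen.trans⟩
  have h1 : l.Chain' (Relation.TransGen r) := hl.imp fun _ _ h => Relation.TransGen.single h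
  have h2 := List.isChain_iff_pairwise.mp h1
  exact h2.imp fun {a b} h heq => by subst heq; exact hr a h

private lemma chain'_reflTransGen {r : V → V → Prop} :
    ∀ {l : List V} {a b : V}, (a :: l).Chain' r → b ∈ a :: l →
      Relation.ReflTransGen r a b := by
  intro l
  induction l with
  | nil => intro a b _ hb; rw [List.mem_singleton] at hb; subst hb; exact .refl
  | cons c l ih =>
    intro a b hc hb
    rcases List.mem_cons.mp hb with rfl | hb
    · exact .refl
    · exact Relation.ReflTransGen.head (List.isChain_cons_cons.mp hc).1
        (ih (List.isChain_cons_cons.mp hc).2 hb)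

private lemma exists_last_edge :
    ∀ (r : List V) (a b : V) (h : (a :: b :: r : List V) ≠ []),
      ∃ y, (y, (a :: b :: r).getLast h) ∈ pathEdges (a :: b :: r) := by
  intro r
  induction r with
  | nil => intro a b _; exact ⟨a, by simp [pathEdges]⟩
  | cons c r ih =>
    intro a b _
    obtain ⟨y, hy⟩ := ih b c (by simp)
    refine ⟨y, ?_⟩
    rw [pathEdges_cons_cons, List.mem_cons]
    right
    simpa [List.getLast_cons] using hy

private lemma sum_ite_fst [Fintype V] [DecidableEq V] (c : ℝ) :
    ∀ (l : List V), l.Nodup → ∀ x : V,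
      (∑ y, if (x, y) ∈ pathEdges l then c else 0) = if x ∈ l.dropLast then c else 0 := by
  intro l
  induction l with
  | nil => intro _ x; simp [pathEdges]
  | cons a l ih =>
    cases l with
    | nil => intro _ x; simp [pathEdges]
    | cons b t =>
      intro hnd x
      have hna : a ∉ b :: t := (List.nodup_cons.mp hnd).1
      rw [pathEdges_cons_cons]
      by_cases hx : x = a
      · subst hx
        have h1 : ∀ y : V, ((x, y) ∈ (x, b) :: pathEdges (b :: t)) ↔ y = b := by
          intro y
          rw [List.mem_cons]
          constructor
          · rintro (h | h)
            · exact (Prod.mk.injEq .. ▸ h).2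
            · exact absurd (mem_of_mem_pathEdges h).1 hna
          · rintro rfl; exact Or.inl rfl
        calc (∑ y, if (x, y) ∈ (x, b) :: pathEdges (b :: t) then c else 0)
            = ∑ y, if y = b then c else 0 :=
              Finset.sum_congr rfl fun y _ => by rw [if_congr (h1 y) rfl rfl]
          _ = c := by simp
          _ = if x ∈ (x :: b :: t).dropLast then c else 0 := by
              rw [List.dropLast_cons₂, if_pos (List.mem_cons_self)]
      · have h1 : ∀ y : V, ((x, y) ∈ (a, b) :: pathEdges (b :: t)) ↔
            (x, y) ∈ pathEdges (b :: t) := by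
          intro y
          rw [List.mem_cons]
          constructor
          · rintro (h | h)
            · exact absurd (Prod.mk.injEq .. ▸ h).1 hx
            · exact h
          · exact Or.inr
        calc (∑ y, if (x, y) ∈ (a, b) :: pathEdges (b :: t) then c else 0)
            = ∑ y, if (x, y) ∈ pathEdges (b :: t) then c else 0 :=
              Finset.sum_congr rfl fun y _ => by rw [if_congr (h1 y) rfl rfl]
          _ = if x ∈ (b :: t).dropLast then c else 0 := ih (List.nodup_cons.mp hnd).2 x
          _ = if x ∈ (a :: b :: t).dropLast then c else 0 := by
              rw [List.dropLast_cons₂]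
              exact (if_congr (show x ∈ a :: (b :: t).dropLast ↔ x ∈ (b :: t).dropLast by
                simp [hx]) rfl rfl).symm

private lemma sum_ite_snd [Fintype V] [DecidableEq V] (c : ℝ) :
    ∀ (l : List V), l.Nodup → ∀ x : V,
      (∑ y, if (y, x) ∈ pathEdges l then c else 0) = if x ∈ l.tail then c else 0 := by
  intro l
  induction l with
  | nil => intro _ x; simp [pathEdges]
  | cons a l ih =>
    cases l with
    | nil => intro _ x; simp [pathEdges]
    | cons b t =>
      intro hnd x
      have hnb : b ∉ t := (List.nodup_cons.mp (List.nodup_cons.mp hnd).2).1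
      rw [pathEdges_cons_cons]
      by_cases hx : x = b
      · have h1 : ∀ y : V, ((y, x) ∈ (a, b) :: pathEdges (b :: t)) ↔ y = a := by
          intro y
          rw [List.mem_cons]
          constructor
          · rintro (h | h)
            · exact (Prod.mk.injEq .. ▸ h).1
            · have := (mem_of_mem_pathEdges h).2
              rw [hx] at this
              exact absurd (by simpa using this) hnb
          · rintro rfl
            rw [hx]
            exact Or.inl rfl
        calc (∑ y, if (y, x) ∈ (a, b) :: pathEdges (b :: t) then c else 0)
            = ∑ y, if y = a then c else 0 :=
              Finset.sum_congr rfl fun y _ => by rw [if_congr (h1 y) rfl rfl]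
          _ = c := by simp
          _ = if x ∈ (a :: b :: t).tail then c else 0 := by
              rw [List.tail_cons, if_pos (by rw [hx]; exact List.mem_cons_self)]
      · have h1 : ∀ y : V, ((y, x) ∈ (a, b) :: pathEdges (b :: t)) ↔
            (y, x) ∈ pathEdges (b :: t) := by
          intro y
          rw [List.mem_cons]
          constructor
          · rintro (h | h)
            · exact absurd (Prod.mk.injEq .. ▸ h).2 (Ne.symm hx ∘ Eq.symm)
            · exact h
          · exact Or.inr
        calc (∑ y, if (y, x) ∈ (a, b) :: pathEdges (b :: t) then c else 0)
            = ∑ y, if (y, x) ∈ pathEdges (b :: t) then c else 0 :=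
              Finset.sum_congr rfl fun y _ => by rw [if_congr (h1 y) rfl rfl]
          _ = if x ∈ t then c else 0 := ih (List.nodup_cons.mp hnd).2 x
          _ = if x ∈ (a :: b :: t).tail then c else 0 :=
              (if_congr (show x ∈ (a :: b :: t).tail ↔ x ∈ t by simp [hx]) rfl rfl).symm

private lemma boundary_ite [DecidableEq V] (a b : V) (r : List V)
    (hnd : (a :: b :: r).Nodup) (c : ℝ) (x : V) (hne : (a :: b :: r : List V) ≠ []) :
    (if x ∈ (a :: b :: r).dropLast then c else 0) -
        (if x ∈ (a :: b :: r).tail then c else 0)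
      = (if x = a then c else 0) -
        (if x = (a :: b :: r).getLast hne then c else 0) := by
  generalize hgl : (a :: b :: r).getLast hne = t
  have hsplit : (a :: b :: r).dropLast ++ [t] = a :: b :: r := by
    rw [← hgl]; exact List.dropLast_append_getLast hne
  have hnd2 : ((a :: b :: r).dropLast ++ [t]).Nodup := by rw [hsplit]; exact hnd
  have hdisj := (List.nodup_append'.mp hnd2).2.2
  have htdrop : t ∉ (a :: b :: r).dropLast := fun h => hdisj h (by simp)
  have htmem : t ∈ (a :: b :: r).tail := by
    rw [List.tail_cons, ← hgl, List.getLast_cons (by simp)]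
    exact List.getLast_mem _
  have hamem : a ∈ (a :: b :: r).dropLast := by
    rw [List.dropLast_cons₂]; exact List.mem_cons_self
  have hatail : a ∉ (a :: b :: r).tail := by
    simpa using (List.nodup_cons.mp hnd).1
  by_cases h1 : x ∈ (a :: b :: r).dropLast <;> by_cases h2 : x ∈ (a :: b :: r).tail
  · have hxa : x ≠ a := fun h => hatail (h ▸ h2)
    have hxt : x ≠ t := fun h => htdrop (h ▸ h1)
    rw [if_pos h1, if_pos h2, if_neg hxa, if_neg hxt]
    ring
  · have hxa : x = a := by
      have hx : x ∈ a :: b :: r := List.dropLast_subset _ h1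
      rcases List.mem_cons.mp hx with h | h
      · exact h
      · exact absurd (by simpa using h) (by simpa using h2)
    have hxt : x ≠ t := fun h => htdrop (h ▸ h1)
    rw [if_pos h1, if_neg h2, if_pos hxa, if_neg hxt]
  · have hxt : x = t := by
      have hx : x ∈ a :: b :: r := List.mem_of_mem_tail h2
      rw [← hsplit] at hx
      rcases List.mem_append.mp hx with h | h
      · exact absurd h h1
      · simpa using h
    have hxa : x ≠ a := fun h => hatail (h ▸ h2)
    rw [if_neg h1, if_pos h2, if_neg hxa, if_pos hxt]
  · have hxa : x ≠ a := fun h => h1 (h ▸ hamem)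
    have hxt : x ≠ t := fun h => h2 (h ▸ htmem)
    rw [if_neg h1, if_neg h2, if_neg hxa, if_neg hxt]

private lemma diag_case [Fintype V] [DecidableEq V] (Q : V × V → ℝ) (μ₁ μ₂ : V → ℝ)
    (hQ0 : ∀ e, 0 ≤ Q e) (hzero : ∀ e : V × V, ¬ 0 < Q e)
    (hμ₁ : ∀ x, 0 ≤ μ₁ x)
    (hdiv : ∀ x, divergenceF Q x = μ₁ x - μ₂ x) :
    ∃ ρ : V × V → ℝ, (∀ p, 0 ≤ ρ p) ∧ (∀ x, ∑ y, ρ (x, y) = μ₁ x) ∧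
      (∀ y, ∑ x, ρ (x, y) = μ₂ y) ∧
      ∀ p : V × V, ρ p ≠ 0 →
        Relation.ReflTransGen (fun a b => 0 < Q (a, b)) p.1 p.2 := by
  have hz : ∀ e, Q e = 0 := fun e => le_antisymm (not_lt.mp (hzero e)) (hQ0 e)
  have heq : ∀ x, μ₁ x = μ₂ x := by
    intro x
    have hd := hdiv x
    rw [divergenceF] at hd
    simp only [hz] at hd
    simp at hd
    linarith
  refine ⟨fun p => if p.1 = p.2 then μ₁ p.1 else 0, ?_, ?_, ?_, ?_⟩
  · intro p
    dsimp only
    split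
    · exact hμ₁ p.1
    · exact le_rfl
  · intro x; simp
  · intro y
    calc (∑ x, if x = y then μ₁ x else 0) = μ₁ y := by simp
      _ = μ₂ y := heq y
  · intro p hp
    dsimp only at hp
    have h : p.1 = p.2 := by by_contra h; rw [if_neg h] at hp; exact hp rfl
    exact h ▸ Relation.ReflTransGen.refl

private lemma key_lemma [Fintype V] [DecidableEq V] :
    ∀ (n : ℕ) (Q : V × V → ℝ) (μ₁ μ₂ : V → ℝ),
      (Finset.univ.filter (fun e => 0 < Q e)).card ≤ n →
      (∀ e, 0 ≤ Q e) →
      AcyclicRel (fun a b => 0 < Q (a, b)) →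
      (∀ x, 0 ≤ μ₁ x) → (∀ x, 0 ≤ μ₂ x) →
      (∀ x, divergenceF Q x = μ₁ x - μ₂ x) →
      ∃ ρ : V × V → ℝ, (∀ p, 0 ≤ ρ p) ∧ (∀ x, ∑ y, ρ (x, y) = μ₁ x) ∧
        (∀ y, ∑ x, ρ (x, y) = μ₂ y) ∧
        ∀ p : V × V, ρ p ≠ 0 →
          Relation.ReflTransGen (fun a b => 0 < Q (a, b)) p.1 p.2 := by
  intro n
  induction n with
  | zero =>
    intro Q μ₁ μ₂ hcard hQ0 hacyc hμ₁ hμ₂ hdiv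
    refine diag_case Q μ₁ μ₂ hQ0 (fun e he => ?_) hμ₁ hdiv
    have hmem : e ∈ Finset.univ.filter (fun e => 0 < Q e) :=
      Finset.mem_filter.mpr ⟨Finset.mem_univ e, he⟩
    have := Finset.card_pos.mpr ⟨e, hmem⟩
    omega
  | succ n ih =>
    intro Q μ₁ μ₂ hcard hQ0 hacyc hμ₁ hμ₂ hdiv
    by_cases hex : ∃ e : V × V, 0 < Q e
    swap
    · exact diag_case Q μ₁ μ₂ hQ0 (not_exists.mp hex) hμ₁ hdiv
    obtain ⟨⟨a0, b0⟩, h0⟩ := hex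
    set r : V → V → Prop := fun a b => 0 < Q (a, b) with hr
    set S : Set (List V) := {l | l.Chain' r ∧ 2 ≤ l.length} with hS
    have hS0 : [a0, b0] ∈ S := ⟨List.isChain_pair.mpr h0, by simp⟩
    have hbd : ∀ l ∈ S, l.length ≤ Fintype.card V := fun l hl =>
      List.Nodup.length_le_card (chain'_nodup_s7 hacyc hl.1)
    set T : Set ℕ := List.length '' S with hT
    have hTne : T.Nonempty := ⟨2, [a0, b0], hS0, rfl⟩
    have hTbdd : BddAbove T := ⟨Fintype.card V, by rintro k ⟨l, hl, rfl⟩; exact hbd l hl⟩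
    obtain ⟨l, hlS, hlen⟩ := Nat.sSup_mem hTne hTbdd
    have hmax : ∀ l' ∈ S, l'.length ≤ l.length := by
      intro l' hl'
      rw [hlen]
      exact le_csSup hTbdd ⟨l', hl', rfl⟩
    have hshape : ∃ a b rest, l = a :: b :: rest := by
      rcases l with _ | ⟨a, _ | ⟨b, rest⟩⟩
      · exact absurd hlS.2 (by simp)
      · exact absurd hlS.2 (by simp)
      · exact ⟨a, b, rest, rfl⟩
    obtain ⟨a, b, rest, rfl⟩ := hshape
    have hchain : (a :: b :: rest).Chain' r := hlS.1
    have hnd : (a :: b :: rest).Nodup := chain'_nodup_s7 hacyc hchain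
    have hne2 : (a :: b :: rest : List V) ≠ [] := by simp
    set t := (a :: b :: rest).getLast hne2 with ht
    have hsrc : ∀ y, ¬ r y a := by
      intro y hy
      have hmem : (y :: a :: b :: rest) ∈ S :=
        ⟨List.isChain_cons_cons.mpr ⟨hy, hchain⟩, by simp⟩
      have := hmax _ hmem
      simp at this
    have hsink : ∀ y, ¬ r t y := by
      intro y hy
      have hch : ((a :: b :: rest) ++ [y]).Chain' r := by
        refine List.isChain_append.mpr ?_
        refine ⟨hchain, List.isChain_singleton y, ?_⟩
        intro x hx z hz
        rw [List.getLast?_eq_getLast hne2, Option.mem_some_iff] at hx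
        simp only [List.head?_cons, Option.mem_some_iff] at hz
        subst hx; subst hz
        exact hy
      have hmem : ((a :: b :: rest) ++ [y]) ∈ S := ⟨hch, by simp⟩
      have := hmax _ hmem
      simp at this
    have hsrc0 : ∀ y, Q (y, a) = 0 := fun y => le_antisymm (not_lt.mp (hsrc y)) (hQ0 _)
    have hsink0 : ∀ y, Q (t, y) = 0 := fun y => le_antisymm (not_lt.mp (hsink y)) (hQ0 _)
    set P := pathEdges (a :: b :: rest) with hP
    have habP : (a, b) ∈ P := by rw [hP, pathEdges_cons_cons]; exact List.mem_cons_self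
    have hFne : P.toFinset.Nonempty := ⟨(a, b), List.mem_toFinset.mpr habP⟩
    set ε := P.toFinset.inf' hFne Q with hε
    have hεle : ∀ e ∈ P, ε ≤ Q e := fun e he => Finset.inf'_le _ (List.mem_toFinset.mpr he)
    obtain ⟨estar, hestar, hεeq⟩ := Finset.exists_mem_eq_inf' hFne Q
    have hestarP : estar ∈ P := List.mem_toFinset.mp hestar
    have hestarpos : 0 < Q estar := by
      obtain ⟨u, v⟩ := estar
      exact chain'_of_pathEdges hchain hestarP
    have hεeq' : ε = Q estar := hεeq
    have hεpos : 0 < ε := by rw [hεeq']; exact hestarpos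
    set Q' : V × V → ℝ := fun e => Q e - (if e ∈ P then ε else 0) with hQ'
    set μ₁' : V → ℝ := fun x => μ₁ x - (if x = a then ε else 0) with hμ₁'
    set μ₂' : V → ℝ := fun x => μ₂ x - (if x = t then ε else 0) with hμ₂'
    have hQ'def : ∀ e, Q' e = Q e - (if e ∈ P then ε else 0) := fun e => rfl
    have hQ'le : ∀ e, Q' e ≤ Q e := by
      intro e; rw [hQ'def]; split <;> linarith [hεpos.le]
    have hQ'0 : ∀ e, 0 ≤ Q' e := by
      intro e; rw [hQ'def]; split
      · next h => linarith [hεle e h]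
      · linarith [hQ0 e]
    have hrel : ∀ p q : V, 0 < Q' (p, q) → 0 < Q (p, q) :=
      fun p q h => lt_of_lt_of_le h (hQ'le _)
    have hQ'acyc : AcyclicRel fun p q => 0 < Q' (p, q) := by
      intro x hx
      exact hacyc x (Relation.TransGen.mono hrel _ _ hx)
    have hQab : ε ≤ Q (a, b) := hεle _ habP
    have hsum_in_a : (∑ y, Q (y, a)) = 0 := Finset.sum_eq_zero fun y _ => hsrc0 y
    have hout_a : Q (a, b) ≤ ∑ y, Q (a, y) :=
      Finset.single_le_sum (fun y _ => hQ0 (a, y)) (Finset.mem_univ b)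
    have hμ₁a : ε ≤ μ₁ a := by
      have hd := hdiv a
      rw [divergenceF, hsum_in_a] at hd
      have := hμ₂ a
      linarith
    obtain ⟨w, hwt⟩ := exists_last_edge rest a b hne2
    have hwt' : (w, t) ∈ P := by rw [ht, hP]; exact hwt
    have hQwt : ε ≤ Q (w, t) := hεle _ hwt'
    have hin_t : Q (w, t) ≤ ∑ y, Q (y, t) :=
      Finset.single_le_sum (fun y _ => hQ0 (y, t)) (Finset.mem_univ w)
    have hsum_out_t : (∑ y, Q (t, y)) = 0 := Finset.sum_eq_zero fun y _ => hsink0 y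
    have hμ₂t : ε ≤ μ₂ t := by
      have hd := hdiv t
      rw [divergenceF, hsum_out_t] at hd
      have := hμ₁ t
      linarith
    have hμ₁'def : ∀ x, μ₁' x = μ₁ x - (if x = a then ε else 0) := fun x => rfl
    have hμ₂'def : ∀ x, μ₂' x = μ₂ x - (if x = t then ε else 0) := fun x => rfl
    have hμ₁'0 : ∀ x, 0 ≤ μ₁' x := by
      intro x; rw [hμ₁'def]; split
      · next h => subst h; linarith
      · linarith [hμ₁ x]
    have hμ₂'0 : ∀ x, 0 ≤ μ₂' x := by
      intro x; rw [hμ₂'def]; split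
      · next h => subst h; linarith
      · linarith [hμ₂ x]
    have hdiv' : ∀ x, divergenceF Q' x = μ₁' x - μ₂' x := by
      intro x
      have e1 : (∑ y, Q' (x, y)) =
          (∑ y, Q (x, y)) - (if x ∈ (a :: b :: rest).dropLast then ε else 0) := by
        simp only [hQ'def]
        rw [Finset.sum_sub_distrib, sum_ite_fst ε _ hnd x]
      have e2 : (∑ y, Q' (y, x)) =
          (∑ y, Q (y, x)) - (if x ∈ (a :: b :: rest).tail then ε else 0) := by
        simp only [hQ'def]
        rw [Finset.sum_sub_distrib, sum_ite_snd ε _ hnd x]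
      have e3 := boundary_ite a b rest hnd ε x hne2
      rw [← ht] at e3
      have hd := hdiv x
      rw [divergenceF] at hd
      rw [divergenceF, e1, e2, hμ₁'def, hμ₂'def]
      linarith
    have hcard' : (Finset.univ.filter fun e => 0 < Q' e).card ≤ n := by
      have hsub : (Finset.univ.filter fun e => 0 < Q' e) ⊆
          Finset.univ.filter fun e => 0 < Q e := by
        intro e he
        rw [Finset.mem_filter] at he ⊢
        exact ⟨Finset.mem_univ e, lt_of_lt_of_le he.2 (hQ'le e)⟩
      have hestarQ' : ¬ 0 < Q' estar := by
        rw [hQ'def, if_pos hestarP]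
        linarith [hεeq'.ge]
      have hssub : (Finset.univ.filter fun e => 0 < Q' e) ⊂
          Finset.univ.filter fun e => 0 < Q e := by
        rw [Finset.ssubset_iff_of_subset hsub]
        exact ⟨estar, Finset.mem_filter.mpr ⟨Finset.mem_univ _, hestarpos⟩,
          fun h => hestarQ' (Finset.mem_filter.mp h).2⟩
      have := Finset.card_lt_card hssub
      omega
    obtain ⟨ρ', hρ'0, hm1, hm2, hcomp⟩ :=
      ih Q' μ₁' μ₂' hcard' hQ'0 hQ'acyc hμ₁'0 hμ₂'0 hdiv'
    refine ⟨fun p => ρ' p + (if p = (a, t) then ε else 0), ?_, ?_, ?_, ?_⟩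
    · intro p
      dsimp only
      by_cases h : p = (a, t)
      · rw [if_pos h]; linarith [hρ'0 p, hεpos.le]
      · rw [if_neg h]; linarith [hρ'0 p]
    · intro x
      rw [Finset.sum_add_distrib, hm1 x]
      have h2 : (∑ y, if (x, y) = (a, t) then ε else 0) = if x = a then ε else 0 := by
        by_cases hx : x = a
        · subst hx; simp
        · simp [Prod.ext_iff, hx]
      rw [h2, hμ₁'def]
      ring
    · intro y
      rw [Finset.sum_add_distrib, hm2 y]
      have h2 : (∑ x, if (x, y) = (a, t) then ε else 0) = if y = t then ε else 0 := by
        by_cases hy : y = t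
        · subst hy; simp
        · simp [Prod.ext_iff, hy]
      rw [h2, hμ₂'def]
      ring
    · intro p hp
      dsimp only at hp
      by_cases h : ρ' p = 0
      · have hpe : p = (a, t) := by
          by_contra hne
          rw [if_neg hne, h] at hp
          exact hp (by ring)
        subst hpe
        have htm : t ∈ a :: b :: rest := by rw [ht]; exact List.getLast_mem _
        exact chain'_reflTransGen hchain htm
      · exact Relation.ReflTransGen.mono hrel _ _ (hcomp p h)

end Helpers

/-- **From an acyclic flow to a compatible coupling, finite case.**
Given a finite digraph and an acyclic flow `Q` with `div Q = μ₁ - μ₂`, there is a coupling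
of `μ₁` and `μ₂` compatible with the partial order induced by `(V, E(Q))`: `ρ(x,y) ≠ 0`
implies `x = y` or there is a directed path from `x` to `y` along edges with `Q > 0`. -/
theorem acyclic_flow_gives_compatible_coupling {V : Type*} [Fintype V]
    (E : Set (V × V)) (hloop : ∀ x : V, (x, x) ∉ E)
    (Q : V × V → ℝ) (hQ : IsFlow E Q)
    (hacyc : AcyclicRel fun a b => 0 < Q (a, b))
    (μ₁ μ₂ : V → ℝ) (h₁ : IsProbF μ₁) (h₂ : IsProbF μ₂)
    (hdiv : ∀ x, divergenceF Q x = μ₁ x - μ₂ x) :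
    ∃ ρ : V × V → ℝ, IsCouplingF μ₁ μ₂ ρ ∧
      ∀ p : V × V, ρ p ≠ 0 → inducedLE {e : V × V | 0 < Q e} p.1 p.2 := by
  classical
  obtain ⟨ρ, h0, hm1, hm2, hcomp⟩ :=
    key_lemma (Finset.univ.filter fun e => 0 < Q e).card Q μ₁ μ₂ le_rfl hQ.1 hacyc
      h₁.1 h₂.1 hdiv
  exact ⟨ρ, ⟨h0, hm1, hm2⟩, fun p hp => hcomp p hp⟩
end
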